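/- arXiv:1804.03277 — 7 statements merged into one kernel-verified Lean document; each statement's English description precedes it below -/
import Mathlib

section
/- Let f be a bounded, nonnegative, measurable function on a measure space (Ω, F, μ). Then ‖f‖₂² / √(‖f‖₁ ‖f‖_∞) ≤ sup over measurable sets S of finite positive measure of (1/√(μ(S))) ∫_S f dμ ≤ ‖f‖₂. -/
open MeasureTheory ENNReal Set

/-- For a bounded, nonnegative, measurable function `f` in `L¹ ∩ L²` on a
measure space `(Ω, ℱ, μ)`, one has
`‖f‖₂² / √(‖f‖₁ ‖f‖_∞) ≤ sup_{S : 0 < μ S < ∞} (∫_S f dμ) / √(μ S) ≤ ‖f‖₂`. -/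
theorem stmt0 {Ω : Type*} [MeasurableSpace Ω] (μ : Measure Ω) (f : Ω → ℝ)
    (hf : Measurable f) (hf0 : ∀ x, 0 ≤ f x)
    (hf_bdd : MemLp f ⊤ μ) (hf1 : MemLp f 1 μ) (hf2 : MemLp f 2 μ) :
    (eLpNorm f 2 μ).toReal ^ 2 /
        Real.sqrt ((eLpNorm f 1 μ).toReal * (eLpNorm f ⊤ μ).toReal) ≤
      sSup {r : ℝ | ∃ S : Set Ω, MeasurableSet S ∧ 0 < μ S ∧ μ S < ⊤ ∧
        r = (∫ x in S, f x ∂μ) / Real.sqrt (μ S).toReal} ∧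
    sSup {r : ℝ | ∃ S : Set Ω, MeasurableSet S ∧ 0 < μ S ∧ μ S < ⊤ ∧
        r = (∫ x in S, f x ∂μ) / Real.sqrt (μ S).toReal} ≤ (eLpNorm f 2 μ).toReal := by
  classical
  set RS : Set ℝ := {r : ℝ | ∃ S : Set Ω, MeasurableSet S ∧ 0 < μ S ∧ μ S < ⊤ ∧
        r = (∫ x in S, f x ∂μ) / Real.sqrt (μ S).toReal} with hRS_def
  set b : ℝ := (eLpNorm f 2 μ).toReal with hb_def
  set a : ℝ := (eLpNorm f 1 μ).toReal with ha_def
  set M : ℝ := (eLpNorm f ⊤ μ).toReal with hM_def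
  set V : ℝ := sSup RS with hV_def
  have hb0 : 0 ≤ b := ENNReal.toReal_nonneg
  have ha0 : 0 ≤ a := ENNReal.toReal_nonneg
  have hM0 : 0 ≤ M := ENNReal.toReal_nonneg
  set F : Ω → ℝ≥0∞ := fun x => ENNReal.ofReal (f x) with hF_def
  have hF : Measurable F := ENNReal.measurable_ofReal.comp hf
  have hF0 : ∀ x, f x = 0 → F x = 0 := fun x hx => by simp [hF_def, hx]
  have hint : Integrable f μ := memLp_one_iff_integrable.mp hf1
  have hconj : Real.HolderConjugate 2 2 := Real.HolderConjugate.two_two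
  -- L¹ norm
  have hIa : ∫⁻ x, F x ∂μ = ENNReal.ofReal a := by
    have h1 : eLpNorm f 1 μ = ∫⁻ x, F x ∂μ := by
      rw [eLpNorm_one_eq_lintegral_enorm]
      exact lintegral_congr fun x => Real.enorm_eq_ofReal (hf0 x)
    rw [← h1, ha_def, ENNReal.ofReal_toReal hf1.eLpNorm_ne_top]
  -- L² norm
  have hsqF : ∀ x : ℝ≥0∞, x ^ (2:ℝ) = x * x := fun x => by
    rw [show (2:ℝ) = ((2:ℕ):ℝ) by norm_num, ENNReal.rpow_natCast, pow_two]
  have hI2 : ∫⁻ x, F x ^ (2:ℝ) ∂μ = ENNReal.ofReal (b ^ 2) := by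
    have h2 : eLpNorm f 2 μ = (∫⁻ x, F x ^ (2:ℝ) ∂μ) ^ (1/2 : ℝ) := by
      rw [eLpNorm_eq_lintegral_rpow_enorm_toReal two_ne_zero ENNReal.ofNat_ne_top]
      simp only [ENNReal.toReal_ofNat]
      congr 1
      exact lintegral_congr fun x => by rw [Real.enorm_eq_ofReal (hf0 x)]
    have h3 : ∫⁻ x, F x ^ (2:ℝ) ∂μ = (eLpNorm f 2 μ) ^ (2:ℝ) := by
      rw [h2, ← ENNReal.rpow_mul]
      norm_num
    rw [h3, ← ENNReal.ofReal_toReal (hf2.eLpNorm_ne_top), ← hb_def,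
      ENNReal.ofReal_rpow_of_nonneg hb0 (by norm_num)]
    norm_num
  have hI2' : ∫⁻ x, F x * F x ∂μ = ENNReal.ofReal (b ^ 2) := by
    rw [← hI2]; exact lintegral_congr fun x => (hsqF (F x)).symm
  -- essential bound
  have hfM : ∀ᵐ x ∂μ, f x ≤ M := by
    have hne : eLpNormEssSup f μ ≠ ⊤ := by
      rw [← eLpNorm_exponent_top]; exact hf_bdd.eLpNorm_ne_top
    filter_upwards [ae_le_eLpNormEssSup (f := f) (μ := μ)] with x hx
    have h1 : (‖f x‖₊ : ℝ≥0∞).toReal ≤ (eLpNormEssSup f μ).toReal :=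
      ENNReal.toReal_mono hne hx
    have h2 : (‖f x‖₊ : ℝ≥0∞).toReal = ‖f x‖ := by simp
    rw [h2] at h1
    calc f x ≤ ‖f x‖ := le_abs_self _
      _ ≤ (eLpNormEssSup f μ).toReal := h1
      _ = M := by rw [hM_def, eLpNorm_exponent_top]
  -- upper bound for each member of RS
  have hUB : ∀ r ∈ RS, r ≤ b := by
    rintro r ⟨S, hS, hSpos, hSfin, rfl⟩
    have hsqrt_pos : 0 < Real.sqrt (μ S).toReal :=
      Real.sqrt_pos.mpr (ENNReal.toReal_pos hSpos.ne' hSfin.ne)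
    rw [div_le_iff₀ hsqrt_pos]
    have h1 : ENNReal.ofReal (∫ x in S, f x ∂μ) = ∫⁻ x in S, F x ∂μ :=
      ofReal_integral_eq_lintegral_ofReal (hint.restrict) (ae_of_all _ hf0)
    have h2 : ∫⁻ x in S, F x ∂μ ≤ ENNReal.ofReal (b * Real.sqrt (μ S).toReal) := by
      have hH := ENNReal.lintegral_mul_le_Lp_mul_Lq (μ.restrict S) hconj
        hF.aemeasurable (aemeasurable_const (b := (1:ℝ≥0∞)))
      simp only [Pi.mul_apply, mul_one, ENNReal.one_rpow] at hH
      calc ∫⁻ x in S, F x ∂μ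
          ≤ (∫⁻ x in S, F x ^ (2:ℝ) ∂μ) ^ (1/2:ℝ) *
            (∫⁻ _ in S, (1:ℝ≥0∞) ∂μ) ^ (1/2:ℝ) := hH
        _ ≤ (∫⁻ x, F x ^ (2:ℝ) ∂μ) ^ (1/2:ℝ) * (μ S) ^ (1/2:ℝ) := by
            apply mul_le_mul'
            · exact ENNReal.rpow_le_rpow (setLIntegral_le_lintegral _ _) (by norm_num)
            · rw [setLIntegral_const S 1, one_mul]
        _ = ENNReal.ofReal (b * Real.sqrt (μ S).toReal) := by
            have e1 : (∫⁻ x, F x ^ (2:ℝ) ∂μ) ^ (1/2:ℝ) = ENNReal.ofReal b := by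
              rw [hI2, ENNReal.ofReal_rpow_of_nonneg (by positivity) (by norm_num),
                ← Real.sqrt_eq_rpow, Real.sqrt_sq hb0]
            have e2 : (μ S) ^ (1/2:ℝ) = ENNReal.ofReal (Real.sqrt (μ S).toReal) := by
              conv_lhs => rw [← ENNReal.ofReal_toReal hSfin.ne]
              rw [ENNReal.ofReal_rpow_of_nonneg ENNReal.toReal_nonneg (by norm_num),
                ← Real.sqrt_eq_rpow]
            rw [e1, e2, ← ENNReal.ofReal_mul hb0]
    have h3 : ENNReal.ofReal (∫ x in S, f x ∂μ) ≤
        ENNReal.ofReal (b * Real.sqrt (μ S).toReal) := h1 ▸ h2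
    exact (ENNReal.ofReal_le_ofReal_iff (by positivity)).mp h3
  have hbdd : BddAbove RS := ⟨b, fun r hr => hUB r hr⟩
  have hV0 : 0 ≤ V := by
    apply Real.sSup_nonneg
    rintro r ⟨S, hS, hSpos, hSfin, rfl⟩
    exact div_nonneg (integral_nonneg hf0) (Real.sqrt_nonneg _)
  refine ⟨?_, Real.sSup_le hUB hb0⟩
  -- lower bound
  obtain ⟨T, hT, hfT, hTsig⟩ := hint.aefinStronglyMeasurable.exists_set_sigmaFinite
  set ν : Measure Ω := μ.restrict T with hν_def
  haveI : SigmaFinite ν := hTsig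
  have hfT0 : (μ.restrict Tᶜ) {x | f x ≠ 0} = 0 := hfT
  have hres : ∀ (G : Ω → ℝ≥0∞), (∀ x, f x = 0 → G x = 0) →
      ∀ s : Set Ω, MeasurableSet s → ∫⁻ x in s, G x ∂μ = ∫⁻ x in s, G x ∂ν := by
    intro G hG0 s hs
    have hG_ae : G =ᵐ[μ.restrict (s ∩ Tᶜ)] 0 := by
      rw [← Measure.restrict_restrict hs]
      exact ae_restrict_of_ae (by filter_upwards [hfT] with x hx using hG0 x hx)
    have hzero : ∫⁻ x in s ∩ Tᶜ, G x ∂μ = 0 := by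
      rw [lintegral_congr_ae hG_ae]; simp
    have hsplit : ∫⁻ x in s, G x ∂μ = ∫⁻ x in s ∩ T, G x ∂μ + ∫⁻ x in s ∩ Tᶜ, G x ∂μ := by
      rw [← lintegral_add_compl (fun x => G x) hT (μ := μ.restrict s),
        Measure.restrict_restrict hT, Measure.restrict_restrict hT.compl,
        Set.inter_comm T s, Set.inter_comm Tᶜ s]
    have hnu : ∫⁻ x in s, G x ∂ν = ∫⁻ x in s ∩ T, G x ∂μ := by
      rw [hν_def, Measure.restrict_restrict hs]
    rw [hsplit, hzero, add_zero, hnu]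
  -- layer-cake measure comparison
  have hSm : ∀ t : ℝ, MeasurableSet {x | t < f x} := fun t =>
    measurableSet_lt measurable_const hf
  have hνS : ∀ t : ℝ, 0 < t → μ {x | t < f x} = ν {x | t < f x} := by
    intro t ht
    have h1 : μ ({x | t < f x} ∩ Tᶜ) = 0 := by
      rw [show μ ({x | t < f x} ∩ Tᶜ) = (μ.restrict Tᶜ) {x | t < f x} from
        (Measure.restrict_apply (hSm t)).symm]
      exact measure_mono_null (fun x hx => ne_of_gt (lt_trans ht hx)) hfT0
    rw [hν_def, Measure.restrict_apply (hSm t)]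
    have h2 := measure_inter_add_diff (μ := μ) {x | t < f x} hT
    rw [← h2, Set.diff_eq, h1, add_zero]
  -- the double-integral representation
  set H : ℝ → Ω → ℝ≥0∞ := fun t => Set.indicator {x | t < f x} F with hH_def
  have hHm : Measurable (Function.uncurry fun (x : Ω) (t : ℝ) => H t x) := by
    have he : (Function.uncurry fun (x : Ω) (t : ℝ) => H t x) =
        Set.indicator {p : Ω × ℝ | p.2 < f p.1} (fun p => F p.1) := by
      ext ⟨x, t⟩
      simp [Function.uncurry, hH_def, Set.indicator_apply]
    rw [he]
    exact (hF.comp measurable_fst).indicator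
      (measurableSet_lt measurable_snd (hf.comp measurable_fst))
  have hpt : ∀ x, ∫⁻ t in Ioi (0:ℝ), H t x = F x * F x := by
    intro x
    have h1 : ∫⁻ t in Ioi (0:ℝ), H t x =
        ∫⁻ t in Ioi (0:ℝ), (Iio (f x)).indicator (fun _ => F x) t := by
      apply lintegral_congr fun t => ?_
      simp [hH_def, Set.indicator_apply, Set.mem_setOf_eq, Set.mem_Iio]
    rw [h1, lintegral_indicator measurableSet_Iio, setLIntegral_const,
      Measure.restrict_apply measurableSet_Iio, Set.Iio_inter_Ioi,
      Real.volume_Ioo, sub_zero]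
  have hmain : ENNReal.ofReal (b ^ 2) =
      ∫⁻ t in Ioi (0:ℝ), ∫⁻ x in {x | t < f x}, F x ∂μ := by
    calc ENNReal.ofReal (b ^ 2) = ∫⁻ x, F x * F x ∂μ := hI2'.symm
      _ = ∫⁻ x, F x * F x ∂ν := by
          have := hres (fun x => F x * F x) (fun x hx => by show F x * F x = 0; rw [hF0 x hx, zero_mul])
            univ MeasurableSet.univ
          simpa [Measure.restrict_univ] using this
      _ = ∫⁻ x, (∫⁻ t in Ioi (0:ℝ), H t x) ∂ν :=
          lintegral_congr fun x => (hpt x).symm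
      _ = ∫⁻ t in Ioi (0:ℝ), ∫⁻ x, H t x ∂ν :=
          lintegral_lintegral_swap hHm.aemeasurable
      _ = ∫⁻ t in Ioi (0:ℝ), ∫⁻ x in {x | t < f x}, F x ∂ν := by
          simp only [hH_def]
          exact lintegral_congr fun t => lintegral_indicator (hSm t) F
      _ = ∫⁻ t in Ioi (0:ℝ), ∫⁻ x in {x | t < f x}, F x ∂μ := by
          apply setLIntegral_congr_fun measurableSet_Ioi
          exact fun t ht => (hres F hF0 _ (hSm t)).symm
  -- vanishing above M
  have hIoiM : ∫⁻ t in Ioi M, ∫⁻ x in {x | t < f x}, F x ∂μ = 0 := by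
    rw [setLIntegral_congr_fun measurableSet_Ioi
      (fun t (ht : t ∈ Ioi M) => ?_), lintegral_zero]
    have hnull : μ {x | t < f x} = 0 :=
      measure_mono_null (fun x (hx : t < f x) => (not_le.mpr (lt_trans ht hx) : ¬ f x ≤ M))
        (ae_iff.mp hfM)
    rw [Measure.restrict_eq_zero.mpr hnull, lintegral_zero_measure]
  -- pointwise bound via sSup on (0, M]
  have hg_bound : ∀ t ∈ Ioc (0:ℝ) M, ∫⁻ x in {x | t < f x}, F x ∂μ ≤
      ENNReal.ofReal V * (μ {x | t < f x}) ^ (1/2:ℝ) := by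
    rintro t ⟨ht0, htM⟩
    by_cases h0 : μ {x | t < f x} = 0
    · rw [Measure.restrict_eq_zero.mpr h0, lintegral_zero_measure]
      exact zero_le
    · have hfin : μ {x | t < f x} < ⊤ :=
        lt_of_le_of_lt (measure_mono fun x (hx : t < f x) => le_of_lt hx)
          (hint.measure_ge_lt_top ht0)
      have hmem : (∫ x in {x | t < f x}, f x ∂μ) / Real.sqrt (μ {x | t < f x}).toReal ∈ RS :=
        ⟨{x | t < f x}, hSm t, pos_iff_ne_zero.mpr h0, hfin, rfl⟩
      have hrV := le_csSup hbdd hmem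
      have hsq : 0 < Real.sqrt (μ {x | t < f x}).toReal :=
        Real.sqrt_pos.mpr (ENNReal.toReal_pos h0 hfin.ne)
      have hIr : ∫ x in {x | t < f x}, f x ∂μ ≤ V * Real.sqrt (μ {x | t < f x}).toReal :=
        (div_le_iff₀ hsq).mp hrV
      calc ∫⁻ x in {x | t < f x}, F x ∂μ
          = ENNReal.ofReal (∫ x in {x | t < f x}, f x ∂μ) :=
            (ofReal_integral_eq_lintegral_ofReal (hint.restrict) (ae_of_all _ hf0)).symm
        _ ≤ ENNReal.ofReal (V * Real.sqrt (μ {x | t < f x}).toReal) :=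
            ENNReal.ofReal_le_ofReal hIr
        _ = ENNReal.ofReal V * (μ {x | t < f x}) ^ (1/2:ℝ) := by
            rw [ENNReal.ofReal_mul hV0]
            congr 1
            rw [Real.sqrt_eq_rpow, ← ENNReal.ofReal_rpow_of_nonneg ENNReal.toReal_nonneg
              (by norm_num), ENNReal.ofReal_toReal hfin.ne]
  -- measurability of t ↦ μ {t < f}
  have hmeas : Measurable fun t : ℝ => μ {x | t < f x} :=
    Antitone.measurable fun t₁ t₂ h12 => measure_mono fun x hx => lt_of_le_of_lt h12 hx
  -- Cauchy–Schwarz on (0, M]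
  have hCS : ∫⁻ t in Ioc (0:ℝ) M, (μ {x | t < f x}) ^ (1/2:ℝ) ≤
      (ENNReal.ofReal a) ^ (1/2:ℝ) * (ENNReal.ofReal M) ^ (1/2:ℝ) := by
    have hH := ENNReal.lintegral_mul_le_Lp_mul_Lq (volume.restrict (Ioc (0:ℝ) M)) hconj
      ((hmeas.pow_const (1/2:ℝ)).aemeasurable) (aemeasurable_const (b := (1:ℝ≥0∞)))
    simp only [Pi.mul_apply, mul_one, ENNReal.one_rpow] at hH
    have he1 : ∫⁻ t in Ioc (0:ℝ) M, ((μ {x | t < f x}) ^ (1/2:ℝ)) ^ (2:ℝ) =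
        ∫⁻ t in Ioc (0:ℝ) M, μ {x | t < f x} := by
      apply lintegral_congr fun t => ?_
      rw [← ENNReal.rpow_mul]
      norm_num
    have he2 : ∫⁻ t in Ioc (0:ℝ) M, μ {x | t < f x} ≤ ENNReal.ofReal a := by
      calc ∫⁻ t in Ioc (0:ℝ) M, μ {x | t < f x}
          ≤ ∫⁻ t in Ioi (0:ℝ), μ {x | t < f x} :=
            lintegral_mono_set Ioc_subset_Ioi_self
        _ = ∫⁻ t in Ioi (0:ℝ), ν {x | t < f x} :=
            setLIntegral_congr_fun measurableSet_Ioi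
              (fun t ht => hνS t ht)
        _ = ∫⁻ x, F x ∂ν :=
            (lintegral_eq_lintegral_meas_lt ν (ae_of_all _ hf0) hf.aemeasurable).symm
        _ = ∫⁻ x, F x ∂μ := by
            have := hres F hF0 univ MeasurableSet.univ
            simpa [Measure.restrict_univ] using this.symm
        _ = ENNReal.ofReal a := hIa
    have he3 : ∫⁻ _ in Ioc (0:ℝ) M, (1:ℝ≥0∞) = ENNReal.ofReal M := by
      rw [setLIntegral_const, one_mul, Real.volume_Ioc, sub_zero]
    calc ∫⁻ t in Ioc (0:ℝ) M, (μ {x | t < f x}) ^ (1/2:ℝ)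
        ≤ (∫⁻ t in Ioc (0:ℝ) M, ((μ {x | t < f x}) ^ (1/2:ℝ)) ^ (2:ℝ)) ^ (1/2:ℝ) *
          (∫⁻ _ in Ioc (0:ℝ) M, (1:ℝ≥0∞)) ^ (1/2:ℝ) := by
            convert hH using 3 <;> norm_num
      _ ≤ (ENNReal.ofReal a) ^ (1/2:ℝ) * (ENNReal.ofReal M) ^ (1/2:ℝ) := by
          rw [he1, he3]
          exact mul_le_mul' (ENNReal.rpow_le_rpow he2 (by norm_num)) le_rfl
  -- assemble
  have hkey_e : ENNReal.ofReal (b ^ 2) ≤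
      ENNReal.ofReal V * ((ENNReal.ofReal a) ^ (1/2:ℝ) * (ENNReal.ofReal M) ^ (1/2:ℝ)) := by
    rw [hmain, ← Ioc_union_Ioi_eq_Ioi hM0,
      lintegral_union measurableSet_Ioi (Ioc_disjoint_Ioi le_rfl), hIoiM, add_zero]
    calc ∫⁻ t in Ioc (0:ℝ) M, ∫⁻ x in {x | t < f x}, F x ∂μ
        ≤ ∫⁻ t in Ioc (0:ℝ) M, ENNReal.ofReal V * (μ {x | t < f x}) ^ (1/2:ℝ) := by
          apply lintegral_mono_ae
          filter_upwards [ae_restrict_mem measurableSet_Ioc] with t ht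
          exact hg_bound t ht
      _ = ENNReal.ofReal V * ∫⁻ t in Ioc (0:ℝ) M, (μ {x | t < f x}) ^ (1/2:ℝ) :=
          lintegral_const_mul' _ _ ENNReal.ofReal_ne_top
      _ ≤ ENNReal.ofReal V * ((ENNReal.ofReal a) ^ (1/2:ℝ) * (ENNReal.ofReal M) ^ (1/2:ℝ)) :=
          mul_le_mul' le_rfl hCS
  have hkey : b ^ 2 ≤ V * (Real.sqrt a * Real.sqrt M) := by
    have h1 : ENNReal.ofReal V * ((ENNReal.ofReal a) ^ (1/2:ℝ) * (ENNReal.ofReal M) ^ (1/2:ℝ)) =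
        ENNReal.ofReal (V * (Real.sqrt a * Real.sqrt M)) := by
      rw [ENNReal.ofReal_rpow_of_nonneg ha0 (by norm_num),
        ENNReal.ofReal_rpow_of_nonneg hM0 (by norm_num),
        ← ENNReal.ofReal_mul (by positivity), ← ENNReal.ofReal_mul hV0,
        ← Real.sqrt_eq_rpow, ← Real.sqrt_eq_rpow]
    rw [h1] at hkey_e
    exact (ENNReal.ofReal_le_ofReal_iff (by positivity)).mp hkey_e
  rw [show Real.sqrt (a * M) = Real.sqrt a * Real.sqrt M from Real.sqrt_mul ha0 M]
  by_cases hz : Real.sqrt a * Real.sqrt M = 0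
  · rw [hz, _root_.div_zero]; exact hV0
  · have hpos : 0 < Real.sqrt a * Real.sqrt M :=
      lt_of_le_of_ne (by positivity) (Ne.symm hz)
    rw [div_le_iff₀ hpos]
    exact hkey
end

section
/- Let f be a bounded, measurable (not necessarily nonnegative) function on a measure space (Ω, F, μ). Then ‖f‖₂² / √(2 ‖f‖₁ ‖f‖_∞) ≤ sup over measurable sets S of finite positive measure of (1/√(μ(S))) |∫_S f dμ| ≤ ‖f‖₂. -/
open MeasureTheory ENNReal Set

lemma gLemmaAux {Ω : Type*} [MeasurableSpace Ω] (μ : Measure Ω) (g : Ω → ℝ) (hg : Measurable g)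
    (hg0 : ∀ x, 0 ≤ g x) {L M : ℝ} (hL : 0 ≤ L) (hM : 0 ≤ M)
    (hbdd : ∀ᵐ x ∂μ, g x ≤ L)
    (hyp : ∀ θ : ℝ, 0 < θ → ∫⁻ x in {x | θ < g x}, ENNReal.ofReal (g x) ∂μ
      ≤ ENNReal.ofReal M * (μ {x | θ < g x}) ^ (1/2 : ℝ)) :
    ∫⁻ x, ENNReal.ofReal (g x ^ 2) ∂μ
      ≤ ENNReal.ofReal M * (ENNReal.ofReal L * ∫⁻ x, ENNReal.ofReal (g x) ∂μ) ^ (1/2 : ℝ) := by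
  set m : ℝ → ℝ≥0∞ := fun t => μ {x | t < g x} with hm
  have m_anti : Antitone m := fun s t hst => measure_mono (fun x hx => lt_of_le_of_lt hst hx)
  have m_mble : Measurable m := m_anti.measurable
  have g_nn : 0 ≤ᵐ[μ] g := Filter.Eventually.of_forall hg0
  -- Step 1 : layer cake for g²
  have step1 : ∫⁻ x, ENNReal.ofReal (g x ^ 2) ∂μ
      = ∫⁻ t in Ioi (0:ℝ), m t * ENNReal.ofReal (2 * t) := by
    have h := lintegral_comp_eq_lintegral_meas_lt_mul μ g_nn hg.aemeasurable
      (g := fun t => 2 * t) (fun t _ => (continuous_const.mul continuous_id).intervalIntegrable 0 t)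
      (Filter.Eventually.mono (ae_restrict_mem measurableSet_Ioi)
        (fun t ht => le_of_lt (by linarith [ht.out] : (0:ℝ) < 2*t)))
    rw [← h]
    congr 1
    ext x
    congr 1
    rw [intervalIntegral.integral_const_mul, integral_id]
    ring
  -- Step 2 : layer cake for g
  have step2 : ∫⁻ t in Ioi (0:ℝ), m t = ∫⁻ x, ENNReal.ofReal (g x) ∂μ :=
    (lintegral_eq_lintegral_meas_lt μ g_nn hg.aemeasurable).symm
  -- Step 3 : layer cake for the truncated integrals
  have step3 : ∀ t : ℝ, 0 < t → ∫⁻ x in {x | t < g x}, ENNReal.ofReal (g x) ∂μ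
      = m t * ENNReal.ofReal t + ∫⁻ s in Ioi t, m s := by
    intro t ht
    have h := lintegral_eq_lintegral_meas_lt (μ.restrict {x | t < g x}) (ae_restrict_of_ae g_nn)
      hg.aemeasurable.restrict
    rw [h]
    have hrs : ∀ s : ℝ, (μ.restrict {x | t < g x}) {x | s < g x} = m (max s t) := by
      intro s
      rw [Measure.restrict_apply (measurableSet_lt measurable_const hg)]
      congr 1
      ext x
      simp [max_lt_iff, and_comm]
    rw [setLIntegral_congr_fun measurableSet_Ioi
      (fun s _ => hrs s)]
    have hsplit : Ioi (0:ℝ) = Ioc 0 t ∪ Ioi t := (Ioc_union_Ioi_eq_Ioi ht.le).symm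
    rw [hsplit, lintegral_union measurableSet_Ioi Ioc_disjoint_Ioi_same]
    congr 1
    · rw [setLIntegral_congr_fun measurableSet_Ioc
        (fun s hs => by rw [max_eq_right hs.2])]
      simp [Real.volume_Ioc, ht.le, mul_comm]
    · exact setLIntegral_congr_fun measurableSet_Ioi
        (fun s hs => by rw [max_eq_left (le_of_lt hs.out)])
  -- Step 5 : Tonelli for the tail integral
  have step5 : (∫⁻ t in Ioi (0:ℝ), ∫⁻ s in Ioi t, m s)
      = ∫⁻ s in Ioi (0:ℝ), m s * ENNReal.ofReal s := by
    have e1 : ∀ t ∈ Ioi (0:ℝ), (∫⁻ s in Ioi t, m s)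
        = ∫⁻ s in Ioi (0:ℝ), (Ioi t).indicator m s := by
      intro t ht
      rw [lintegral_indicator measurableSet_Ioi, Measure.restrict_restrict measurableSet_Ioi]
      congr 1
      rw [Ioi_inter_Ioi, max_eq_left ht.out.le]
    rw [setLIntegral_congr_fun measurableSet_Ioi e1]
    have swap := lintegral_lintegral_swap (μ := (volume : Measure ℝ).restrict (Ioi 0))
      (ν := (volume : Measure ℝ).restrict (Ioi 0))
      (f := fun t s => (Ioi t).indicator m s) ?_
    · rw [swap]
      apply setLIntegral_congr_fun measurableSet_Ioi
      intro s hs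
      have e2 : ∀ t : ℝ, (Ioi t).indicator m s = (Iio s).indicator (fun _ => m s) t := by
        intro t
        by_cases h : t < s
        · rw [indicator_of_mem (mem_Ioi.2 h), indicator_of_mem (mem_Iio.2 h)]
        · rw [indicator_of_notMem (by simpa using h), indicator_of_notMem (by simpa using h)]
      calc ∫⁻ t in Ioi (0:ℝ), (Ioi t).indicator m s
          = ∫⁻ t in Ioi (0:ℝ), (Iio s).indicator (fun _ => m s) t :=
            lintegral_congr (fun t => e2 t)
        _ = ∫⁻ t in Iio s, (fun _ => m s) t ∂((volume : Measure ℝ).restrict (Ioi 0)) :=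
            lintegral_indicator measurableSet_Iio _
        _ = m s * ENNReal.ofReal s := by
            rw [Measure.restrict_restrict measurableSet_Iio, lintegral_const,
              Measure.restrict_apply_univ]
            have : Iio s ∩ Ioi (0:ℝ) = Ioo 0 s := by ext y; simp [mem_Ioo, and_comm]
            rw [this, Real.volume_Ioo, sub_zero]
    · apply Measurable.aemeasurable
      have : (Function.uncurry fun t s => (Ioi t).indicator m s)
          = fun p : ℝ × ℝ => ({q : ℝ × ℝ | q.1 < q.2}).indicator (fun q => m q.2) p := by
        ext ⟨t, s⟩
        by_cases h : t < s
        · simp [Set.indicator_apply, h]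
        · simp [Set.indicator_apply, h]
      rw [this]
      exact (m_mble.comp measurable_snd).indicator (measurableSet_lt measurable_fst measurable_snd)
  -- Step 6 : combine to get the key identity
  have mt_mble : Measurable (fun t : ℝ => m t * ENNReal.ofReal t) :=
    m_mble.mul measurable_ofReal
  have step6 : ∫⁻ x, ENNReal.ofReal (g x ^ 2) ∂μ
      = ∫⁻ t in Ioi (0:ℝ), (m t * ENNReal.ofReal t + ∫⁻ s in Ioi t, m s) := by
    rw [lintegral_add_left mt_mble, step5, step1, ← lintegral_add_left mt_mble]
    apply setLIntegral_congr_fun measurableSet_Ioi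
    intro t ht
    dsimp only
    rw [two_mul, ENNReal.ofReal_add ht.out.le ht.out.le, mul_add]
  -- Step 7 : bound by the hypothesis
  have step7 : ∫⁻ x, ENNReal.ofReal (g x ^ 2) ∂μ
      ≤ ENNReal.ofReal M * ∫⁻ t in Ioi (0:ℝ), (m t) ^ (1/2 : ℝ) := by
    rw [step6, ← lintegral_const_mul _ (m_mble.pow_const _)]
    apply setLIntegral_mono (by fun_prop) -- measurability of t ↦ M * (m t)^(1/2)
    intro t ht
    rw [← step3 t ht]
    exact hyp t ht
  -- Step 8 : restrict to (0, L]
  have hLnull : μ {x | L < g x} = 0 := by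
    simpa [not_le] using ae_iff.1 hbdd
  have step8 : ∫⁻ t in Ioi (0:ℝ), (m t) ^ (1/2 : ℝ)
      = ∫⁻ t in Ioc (0:ℝ) L, (m t) ^ (1/2 : ℝ) := by
    rw [← Ioc_union_Ioi_eq_Ioi hL, lintegral_union measurableSet_Ioi Ioc_disjoint_Ioi_same]
    have : ∫⁻ t in Ioi L, (m t) ^ (1/2 : ℝ) = 0 := by
      rw [setLIntegral_congr_fun measurableSet_Ioi
        (fun t ht => ?_), lintegral_zero]
      have hmt : m t = 0 := measure_mono_null
        (fun x hx => lt_trans ht.out hx) hLnull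
      rw [hmt, ENNReal.zero_rpow_of_pos (by norm_num)]
    rw [this, add_zero]
  -- Step 9 : Cauchy-Schwarz
  have step9 : ∫⁻ t in Ioc (0:ℝ) L, (m t) ^ (1/2 : ℝ)
      ≤ (∫⁻ x, ENNReal.ofReal (g x) ∂μ) ^ (1/2 : ℝ) * (ENNReal.ofReal L) ^ (1/2 : ℝ) := by
    have hconj : Real.HolderConjugate 2 2 := by rw [Real.holderConjugate_iff]; constructor <;> norm_num
    have cs := ENNReal.lintegral_mul_le_Lp_mul_Lq ((volume : Measure ℝ).restrict (Ioc 0 L))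
      hconj (f := fun t => (m t) ^ (1/2 : ℝ)) (g := fun _ => 1)
      (m_mble.pow_const _).aemeasurable aemeasurable_const
    simp only [mul_one, Pi.mul_apply] at cs
    refine le_trans cs ?_
    have e1 : ∫⁻ t in Ioc (0:ℝ) L, ((m t) ^ (1/2 : ℝ)) ^ (2:ℝ) = ∫⁻ t in Ioc (0:ℝ) L, m t := by
      apply lintegral_congr
      intro t
      rw [← ENNReal.rpow_mul]
      norm_num
    have e2 : ∫⁻ _ in Ioc (0:ℝ) L, (1:ℝ≥0∞) ^ (2:ℝ) = ENNReal.ofReal L := by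
      simp [Real.volume_Ioc]
    rw [e1, e2]
    have hmono : ∫⁻ (t : ℝ) in Ioc 0 L, m t ≤ ∫⁻ x, ENNReal.ofReal (g x) ∂μ := by
      rw [← step2]
      exact lintegral_mono' (Measure.restrict_mono Ioc_subset_Ioi_self le_rfl) le_rfl
    gcongr
  calc ∫⁻ x, ENNReal.ofReal (g x ^ 2) ∂μ
      ≤ ENNReal.ofReal M * ∫⁻ t in Ioi (0:ℝ), (m t) ^ (1/2 : ℝ) := step7
    _ ≤ ENNReal.ofReal M * ((∫⁻ x, ENNReal.ofReal (g x) ∂μ) ^ (1/2 : ℝ)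
        * (ENNReal.ofReal L) ^ (1/2 : ℝ)) := by rw [step8]; gcongr
    _ = ENNReal.ofReal M * (ENNReal.ofReal L * ∫⁻ x, ENNReal.ofReal (g x) ∂μ) ^ (1/2 : ℝ) := by
        rw [ENNReal.mul_rpow_of_nonneg _ _ (by norm_num : (0:ℝ) ≤ 1/2), mul_comm ((ENNReal.ofReal L) ^ (1/2:ℝ))]

lemma upper_one {Ω : Type*} [MeasurableSpace Ω] {μ : Measure Ω} {f : Ω → ℝ} (hf : Measurable f)
    (hf2 : MemLp f 2 μ) {S : Set Ω} (hS0 : 0 < μ S) (hSfin : μ S < ⊤) :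
    |∫ x in S, f x ∂μ| / Real.sqrt (μ S).toReal ≤ (eLpNorm f 2 μ).toReal := by
  have hsq : 0 < Real.sqrt (μ S).toReal :=
    Real.sqrt_pos.2 (ENNReal.toReal_pos hS0.ne' hSfin.ne)
  rw [div_le_iff₀ hsq]
  have h1 : |∫ x in S, f x ∂μ| ≤ ∫ x in S, |f x| ∂μ := by
    simpa [Real.norm_eq_abs] using norm_integral_le_integral_norm (μ := μ.restrict S) f
  have key : eLpNorm f 1 (μ.restrict S) ≤ eLpNorm f 2 μ * (μ S) ^ (1/2 : ℝ) := by
    have e : (1/(1:ℝ≥0∞).toReal - 1/(2:ℝ≥0∞).toReal) = (1/2 : ℝ) := by norm_num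
    calc eLpNorm f 1 (μ.restrict S)
        ≤ eLpNorm f 2 (μ.restrict S)
            * ((μ.restrict S) univ) ^ (1/(1:ℝ≥0∞).toReal - 1/(2:ℝ≥0∞).toReal) :=
          eLpNorm_le_eLpNorm_mul_rpow_measure_univ (by norm_num)
            hf.aestronglyMeasurable.restrict
      _ ≤ eLpNorm f 2 μ * (μ S) ^ (1/2 : ℝ) := by
          rw [Measure.restrict_apply_univ, e]
          gcongr
          exact Measure.restrict_le_self
  have hfin : eLpNorm f 2 μ * (μ S) ^ (1/2:ℝ) ≠ ⊤ :=
    ENNReal.mul_ne_top hf2.2.ne (ENNReal.rpow_ne_top_of_nonneg (by norm_num) hSfin.ne)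
  have h3 := ENNReal.toReal_mono hfin key
  have h4 : (eLpNorm f 1 (μ.restrict S)).toReal = ∫ x in S, |f x| ∂μ := by
    rw [eLpNorm_one_eq_lintegral_enorm,
      ← integral_norm_eq_lintegral_enorm hf.aestronglyMeasurable.restrict]
    simp [Real.norm_eq_abs]
  have h5 : (eLpNorm f 2 μ * (μ S) ^ (1/2:ℝ)).toReal
      = (eLpNorm f 2 μ).toReal * Real.sqrt (μ S).toReal := by
    rw [ENNReal.toReal_mul, ← ENNReal.toReal_rpow, Real.sqrt_eq_rpow]
  rw [h4, h5] at h3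
  exact le_trans h1 h3

/-- For a bounded, measurable (not necessarily nonnegative) function `f` in
`L¹ ∩ L²` on a measure space `(Ω, ℱ, μ)`, one has
`‖f‖₂² / √(2 ‖f‖₁ ‖f‖_∞) ≤ sup_{S : 0 < μ S < ∞} |∫_S f dμ| / √(μ S) ≤ ‖f‖₂`. -/
theorem stmt1 {Ω : Type*} [MeasurableSpace Ω] (μ : Measure Ω) (f : Ω → ℝ)
    (hf : Measurable f)
    (hf_bdd : MemLp f ⊤ μ) (hf1 : MemLp f 1 μ) (hf2 : MemLp f 2 μ) :
    (eLpNorm f 2 μ).toReal ^ 2 /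
        Real.sqrt (2 * (eLpNorm f 1 μ).toReal * (eLpNorm f ⊤ μ).toReal) ≤
      sSup {r : ℝ | ∃ S : Set Ω, MeasurableSet S ∧ 0 < μ S ∧ μ S < ⊤ ∧
        r = |∫ x in S, f x ∂μ| / Real.sqrt (μ S).toReal} ∧
    sSup {r : ℝ | ∃ S : Set Ω, MeasurableSet S ∧ 0 < μ S ∧ μ S < ⊤ ∧
        r = |∫ x in S, f x ∂μ| / Real.sqrt (μ S).toReal} ≤ (eLpNorm f 2 μ).toReal := by
  set SetR := {r : ℝ | ∃ S : Set Ω, MeasurableSet S ∧ 0 < μ S ∧ μ S < ⊤ ∧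
    r = |∫ x in S, f x ∂μ| / Real.sqrt (μ S).toReal} with hSetR
  set M := sSup SetR with hMdef
  have intf : Integrable f μ := memLp_one_iff_integrable.mp hf1
  have hub : ∀ r ∈ SetR, r ≤ (eLpNorm f 2 μ).toReal := by
    rintro r ⟨S, hSm, hS0, hSfin, rfl⟩
    exact upper_one hf hf2 hS0 hSfin
  have hbdd : BddAbove SetR := ⟨_, hub⟩
  have hM0 : 0 ≤ M := Real.sSup_nonneg (by
    rintro r ⟨S, hSm, hS0, hSfin, rfl⟩
    positivity)
  refine ⟨?_, Real.sSup_le hub ENNReal.toReal_nonneg⟩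
  -- lower bound
  set L := (eLpNorm f ⊤ μ).toReal with hLdef
  have hL0 : 0 ≤ L := ENNReal.toReal_nonneg
  have habs : ∀ᵐ x ∂μ, |f x| ≤ L := by
    have h := ae_le_eLpNormEssSup (f := f) (μ := μ)
    have hfin : eLpNormEssSup f μ ≠ ⊤ := by
      rw [← eLpNorm_exponent_top]; exact hf_bdd.2.ne
    filter_upwards [h] with x hx
    have h2 := ENNReal.toReal_mono hfin hx
    simpa [hLdef, eLpNorm_exponent_top, Real.norm_eq_abs] using h2
  suffices key : (eLpNorm f 2 μ).toReal ^ 2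
      ≤ M * Real.sqrt (2 * (eLpNorm f 1 μ).toReal * L) by
    rcases (Real.sqrt_nonneg (2 * (eLpNorm f 1 μ).toReal * L)).eq_or_lt with h | h
    · rw [← h]; simpa using hM0
    · rw [div_le_iff₀ h]; exact key
  -- positive and negative parts
  set fp : Ω → ℝ := fun x => max (f x) 0 with hfp_def
  set fm : Ω → ℝ := fun x => max (-f x) 0 with hfm_def
  have hfp : Measurable fp := hf.max measurable_const
  have hfm : Measurable fm := hf.neg.max measurable_const
  have hfp0 : ∀ x, 0 ≤ fp x := fun x => le_max_right _ _
  have hfm0 : ∀ x, 0 ≤ fm x := fun x => le_max_right _ _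
  have hfpL : ∀ᵐ x ∂μ, fp x ≤ L := by
    filter_upwards [habs] with x hx
    exact max_le (le_trans (le_abs_self _) hx) hL0
  have hfmL : ∀ᵐ x ∂μ, fm x ≤ L := by
    filter_upwards [habs] with x hx
    exact max_le (le_trans (neg_le_abs _) hx) hL0
  have intfp : Integrable fp μ := by simpa [hfp_def] using intf.pos_part
  have intfm : Integrable fm μ := by simpa [hfm_def] using intf.neg.pos_part
  -- the hypothesis for the positive part
  have hyp_p : ∀ θ : ℝ, 0 < θ → ∫⁻ x in {x | θ < fp x}, ENNReal.ofReal (fp x) ∂μ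
      ≤ ENNReal.ofReal M * (μ {x | θ < fp x}) ^ (1/2 : ℝ) := by
    intro θ hθ
    have hset : {x | θ < fp x} = {x | θ < f x} := by
      ext x
      simp only [hfp_def, mem_setOf_eq, lt_max_iff]
      exact or_iff_left (by linarith)
    rw [hset]
    rcases (zero_le : 0 ≤ μ {x | θ < f x}).eq_or_lt with h0 | h0
    · have hz : μ.restrict {x | θ < f x} = 0 := Measure.restrict_eq_zero.2 h0.symm
      rw [hz, lintegral_zero_measure]
      exact zero_le
    · have hSm : MeasurableSet {x | θ < f x} := measurableSet_lt measurable_const hf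
      have hSfin : μ {x | θ < f x} < ⊤ := intf.measure_gt_lt_top hθ
      have hmem : |∫ x in {x | θ < f x}, f x ∂μ| / Real.sqrt (μ {x | θ < f x}).toReal ∈ SetR :=
        ⟨_, hSm, h0, hSfin, rfl⟩
      have hrM := le_csSup hbdd hmem
      have hsq : 0 < Real.sqrt (μ {x | θ < f x}).toReal :=
        Real.sqrt_pos.2 (ENNReal.toReal_pos h0.ne' hSfin.ne)
      rw [div_le_iff₀ hsq] at hrM
      have hint_nn : 0 ≤ ∫ x in {x | θ < f x}, f x ∂μ :=
        setIntegral_nonneg hSm (fun x hx => le_of_lt (lt_trans hθ hx))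
      have hlint : ∫⁻ x in {x | θ < f x}, ENNReal.ofReal (fp x) ∂μ
          = ENNReal.ofReal (∫ x in {x | θ < f x}, fp x ∂μ) :=
        (ofReal_integral_eq_lintegral_ofReal intfp.restrict
          (Filter.Eventually.of_forall hfp0)).symm
      have hcong : ∫ x in {x | θ < f x}, fp x ∂μ = ∫ x in {x | θ < f x}, f x ∂μ :=
        setIntegral_congr_fun hSm (fun x hx => max_eq_left (le_of_lt (lt_trans hθ hx)))
      rw [hlint, hcong]
      calc ENNReal.ofReal (∫ x in {x | θ < f x}, f x ∂μ)
          ≤ ENNReal.ofReal (M * Real.sqrt (μ {x | θ < f x}).toReal) :=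
            ENNReal.ofReal_le_ofReal (le_trans (le_abs_self _) hrM)
        _ = ENNReal.ofReal M * ENNReal.ofReal (Real.sqrt (μ {x | θ < f x}).toReal) :=
            ENNReal.ofReal_mul hM0
        _ = ENNReal.ofReal M * (μ {x | θ < f x}) ^ (1/2 : ℝ) := by
            congr 1
            rw [Real.sqrt_eq_rpow, ENNReal.toReal_rpow,
              ENNReal.ofReal_toReal (ENNReal.rpow_ne_top_of_nonneg (by norm_num) hSfin.ne)]
  -- the hypothesis for the negative part
  have hyp_m : ∀ θ : ℝ, 0 < θ → ∫⁻ x in {x | θ < fm x}, ENNReal.ofReal (fm x) ∂μ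
      ≤ ENNReal.ofReal M * (μ {x | θ < fm x}) ^ (1/2 : ℝ) := by
    intro θ hθ
    have hset : {x | θ < fm x} = {x | f x < -θ} := by
      ext x
      simp only [hfm_def, mem_setOf_eq, lt_max_iff]
      rw [or_iff_left (by linarith), lt_neg]
    rw [hset]
    rcases (zero_le : 0 ≤ μ {x | f x < -θ}).eq_or_lt with h0 | h0
    · have hz : μ.restrict {x | f x < -θ} = 0 := Measure.restrict_eq_zero.2 h0.symm
      rw [hz, lintegral_zero_measure]
      exact zero_le
    · have hSm : MeasurableSet {x | f x < -θ} := measurableSet_lt hf measurable_const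
      have hSfin : μ {x | f x < -θ} < ⊤ := intf.measure_lt_lt_top (by linarith)
      have hmem : |∫ x in {x | f x < -θ}, f x ∂μ| / Real.sqrt (μ {x | f x < -θ}).toReal ∈ SetR :=
        ⟨_, hSm, h0, hSfin, rfl⟩
      have hrM := le_csSup hbdd hmem
      have hsq : 0 < Real.sqrt (μ {x | f x < -θ}).toReal :=
        Real.sqrt_pos.2 (ENNReal.toReal_pos h0.ne' hSfin.ne)
      rw [div_le_iff₀ hsq] at hrM
      have hlint : ∫⁻ x in {x | f x < -θ}, ENNReal.ofReal (fm x) ∂μ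
          = ENNReal.ofReal (∫ x in {x | f x < -θ}, fm x ∂μ) :=
        (ofReal_integral_eq_lintegral_ofReal intfm.restrict
          (Filter.Eventually.of_forall hfm0)).symm
      have hcong : ∫ x in {x | f x < -θ}, fm x ∂μ = ∫ x in {x | f x < -θ}, (-f) x ∂μ :=
        setIntegral_congr_fun hSm (fun x hx =>
          max_eq_left (neg_nonneg.2 (le_of_lt (lt_trans hx.out (by linarith)))))
      have hneg : ∫ x in {x | f x < -θ}, (-f) x ∂μ = -∫ x in {x | f x < -θ}, f x ∂μ := by
        simp [integral_neg]
      have hint_np : ∫ x in {x | f x < -θ}, f x ∂μ ≤ 0 :=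
        setIntegral_nonpos hSm (fun x hx => le_of_lt (lt_trans hx.out (by linarith)))
      have habs_eq : ∫ x in {x | f x < -θ}, fm x ∂μ = |∫ x in {x | f x < -θ}, f x ∂μ| := by
        rw [hcong, hneg, abs_of_nonpos hint_np]
      rw [hlint, habs_eq]
      calc ENNReal.ofReal |∫ x in {x | f x < -θ}, f x ∂μ|
          ≤ ENNReal.ofReal (M * Real.sqrt (μ {x | f x < -θ}).toReal) :=
            ENNReal.ofReal_le_ofReal hrM
        _ = ENNReal.ofReal M * ENNReal.ofReal (Real.sqrt (μ {x | f x < -θ}).toReal) :=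
            ENNReal.ofReal_mul hM0
        _ = ENNReal.ofReal M * (μ {x | f x < -θ}) ^ (1/2 : ℝ) := by
            congr 1
            rw [Real.sqrt_eq_rpow, ENNReal.toReal_rpow,
              ENNReal.ofReal_toReal (ENNReal.rpow_ne_top_of_nonneg (by norm_num) hSfin.ne)]
  -- apply the key lemma
  have gp := gLemmaAux μ fp hfp hfp0 hL0 hM0 hfpL hyp_p
  have gm := gLemmaAux μ fm hfm hfm0 hL0 hM0 hfmL hyp_m
  set a := ∫ x, fp x ∂μ with ha_def
  set b := ∫ x, fm x ∂μ with hb_def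
  have ha0 : 0 ≤ a := integral_nonneg hfp0
  have hb0 : 0 ≤ b := integral_nonneg hfm0
  have hAp : ∫⁻ x, ENNReal.ofReal (fp x) ∂μ = ENNReal.ofReal a :=
    (ofReal_integral_eq_lintegral_ofReal intfp (Filter.Eventually.of_forall hfp0)).symm
  have hAm : ∫⁻ x, ENNReal.ofReal (fm x) ∂μ = ENNReal.ofReal b :=
    (ofReal_integral_eq_lintegral_ofReal intfm (Filter.Eventually.of_forall hfm0)).symm
  rw [hAp] at gp
  rw [hAm] at gm
  -- the squared L² norm
  set X := ∫⁻ x, ((‖f x‖₊ : ℝ≥0∞)) ^ (2:ℝ) ∂μ with hXdef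
  have hXeq : X = (eLpNorm f 2 μ) ^ (2:ℝ) := by
    rw [eLpNorm_eq_lintegral_rpow_enorm_toReal (by norm_num) (by norm_num), ← ENNReal.rpow_mul]
    norm_num [hXdef, enorm_eq_nnnorm]
  have hXfin : X ≠ ⊤ := by
    rw [hXeq]
    exact (ENNReal.rpow_lt_top_of_nonneg (by norm_num) hf2.2.ne).ne
  have hK2 : (eLpNorm f 2 μ).toReal ^ 2 = X.toReal := by
    rw [hXeq, ← ENNReal.toReal_rpow]
    rw [← Real.rpow_natCast (eLpNorm f 2 μ).toReal 2]
    norm_num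
  -- split X into positive and negative parts
  have hsplit : X = (∫⁻ x, ENNReal.ofReal (fp x ^ 2) ∂μ) + ∫⁻ x, ENNReal.ofReal (fm x ^ 2) ∂μ := by
    rw [← lintegral_add_left (by fun_prop)]
    apply lintegral_congr
    intro x
    have hnn : ((‖f x‖₊ : ℝ≥0∞)) = ENNReal.ofReal |f x| := by
      rw [← Real.norm_eq_abs, ofReal_norm_eq_enorm, enorm_eq_nnnorm]
    rcases le_or_gt 0 (f x) with h | h
    · have e1 : fp x = f x := max_eq_left h
      have e2 : fm x = 0 := max_eq_right (by linarith)
      rw [hnn, e1, e2, abs_of_nonneg h, ENNReal.ofReal_rpow_of_nonneg h (by norm_num)]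
      norm_num
    · have e1 : fp x = 0 := max_eq_right h.le
      have e2 : fm x = -f x := max_eq_left (by linarith)
      rw [hnn, e1, e2, abs_of_neg h, ENNReal.ofReal_rpow_of_nonneg (by linarith) (by norm_num)]
      norm_num
  -- finiteness of the parts
  have hPpfin : (∫⁻ x, ENNReal.ofReal (fp x ^ 2) ∂μ) ≠ ⊤ := by
    intro hcon
    rw [hsplit, hcon] at hXfin
    simp at hXfin
  have hPmfin : (∫⁻ x, ENNReal.ofReal (fm x ^ 2) ∂μ) ≠ ⊤ := by
    intro hcon
    rw [hsplit, hcon] at hXfin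
    simp at hXfin
  -- convert gp, gm to real inequalities
  have hRfin : ∀ c : ℝ, 0 ≤ c → ENNReal.ofReal M * (ENNReal.ofReal L * ENNReal.ofReal c) ^ (1/2:ℝ) ≠ ⊤ :=
    fun c hc => ENNReal.mul_ne_top ENNReal.ofReal_ne_top
      (ENNReal.rpow_ne_top_of_nonneg (by norm_num)
        (ENNReal.mul_ne_top ENNReal.ofReal_ne_top ENNReal.ofReal_ne_top))
  have hRval : ∀ c : ℝ, 0 ≤ c →
      (ENNReal.ofReal M * (ENNReal.ofReal L * ENNReal.ofReal c) ^ (1/2:ℝ)).toReal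
        = M * Real.sqrt (L * c) := by
    intro c hc
    rw [ENNReal.toReal_mul, ← ENNReal.ofReal_mul hL0, ← ENNReal.toReal_rpow,
      ENNReal.toReal_ofReal hM0, ENNReal.toReal_ofReal (mul_nonneg hL0 hc),
      Real.sqrt_eq_rpow]
  have bp : (∫⁻ x, ENNReal.ofReal (fp x ^ 2) ∂μ).toReal ≤ M * Real.sqrt (L * a) := by
    have := ENNReal.toReal_mono (hRfin a ha0) gp
    rwa [hRval a ha0] at this
  have bm : (∫⁻ x, ENNReal.ofReal (fm x ^ 2) ∂μ).toReal ≤ M * Real.sqrt (L * b) := by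
    have := ENNReal.toReal_mono (hRfin b hb0) gm
    rwa [hRval b hb0] at this
  -- a + b = ‖f‖₁
  have hab : a + b = (eLpNorm f 1 μ).toReal := by
    rw [ha_def, hb_def, ← integral_add intfp intfm]
    have e : ∀ x, fp x + fm x = |f x| := fun x =>
      max_zero_add_max_neg_zero_eq_abs_self (f x)
    rw [integral_congr_ae (Filter.Eventually.of_forall e)]
    rw [eLpNorm_one_eq_lintegral_enorm,
      ← integral_norm_eq_lintegral_enorm hf.aestronglyMeasurable]
    simp [Real.norm_eq_abs]
  -- the elementary inequality
  have hsum : Real.sqrt (L * a) + Real.sqrt (L * b)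
      ≤ Real.sqrt (2 * (eLpNorm f 1 μ).toReal * L) := by
    have harg : 0 ≤ 2 * (eLpNorm f 1 μ).toReal * L := by positivity
    rw [Real.le_sqrt (by positivity) harg]
    have s1 := Real.sq_sqrt (mul_nonneg hL0 ha0)
    have s2 := Real.sq_sqrt (mul_nonneg hL0 hb0)
    have s3 := Real.sqrt_nonneg (L * a)
    have s4 := Real.sqrt_nonneg (L * b)
    have s5 := sq_nonneg (Real.sqrt (L * a) - Real.sqrt (L * b))
    nlinarith [hab]
  calc (eLpNorm f 2 μ).toReal ^ 2 = X.toReal := hK2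
    _ = (∫⁻ x, ENNReal.ofReal (fp x ^ 2) ∂μ).toReal
        + (∫⁻ x, ENNReal.ofReal (fm x ^ 2) ∂μ).toReal := by
        rw [hsplit, ENNReal.toReal_add hPpfin hPmfin]
    _ ≤ M * Real.sqrt (L * a) + M * Real.sqrt (L * b) := add_le_add bp bm
    _ = M * (Real.sqrt (L * a) + Real.sqrt (L * b)) := by ring
    _ ≤ M * Real.sqrt (2 * (eLpNorm f 1 μ).toReal * L) :=
        mul_le_mul_of_nonneg_left hsum hM0
end

section
/- Let U : Ω × Ω → ℝ be a symmetric measurable square-integrable function on a σ-finite measure space. Then ‖U‖_{2→2}⁴ ≤ t(C₄, U) ≤ ‖U‖_{2→2}² ‖U‖₂², where t(C₄,U) = ∫∫∫∫ U(x,y)U(y,z)U(z,w)U(w,x) dμ(x)dμ(y)dμ(z)dμ(w). -/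
open MeasureTheory ENNReal

/-- The kernel norm `‖U‖_{2→2}`: the operator norm of the integral operator with kernel `U`
on `L²(Ω, μ)`, expressed as the supremum of `∫∫ f(x) U(x,y) g(y) dμ dμ` over `f, g` of
`L²`-norm one. -/
noncomputable def kernelNorm {Ω : Type*} [MeasurableSpace Ω] (μ : Measure Ω)
    (U : Ω → Ω → ℝ) : ℝ :=
  sSup {r : ℝ | ∃ f g : Ω → ℝ, Measurable f ∧ Measurable g ∧
    eLpNorm f 2 μ = 1 ∧ eLpNorm g 2 μ = 1 ∧
    r = ∫ x, ∫ y, f x * U x y * g y ∂μ ∂μ}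

namespace Stmt2Aux

open Function

variable {α : Type*} [MeasurableSpace α] {ν : Measure α}

lemma int_mul_mem {p q : α → ℝ} (hp : MemLp p 2 ν) (hq : MemLp q 2 ν) :
    Integrable (fun a => p a * q a) ν := by
  have h := L2.integrable_inner (𝕜 := ℝ) (hp.toLp p) (hq.toLp q)
  refine h.congr ?_
  filter_upwards [hp.coeFn_toLp, hq.coeFn_toLp] with a ha hb
  simp [ha, hb, RCLike.inner_apply, mul_comm]

lemma sq_eLpNorm_eq {p : α → ℝ} (hp : MemLp p 2 ν) :
    ((eLpNorm p 2 ν).toReal) ^ 2 = ∫ a, p a ^ 2 ∂ν := by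
  have h1 : ((hp.toLp p : α →₂[ν] ℝ) : α →₂[ν] ℝ) = hp.toLp p := rfl
  have h2 := L2.inner_def (𝕜 := ℝ) (hp.toLp p) (hp.toLp p)
  rw [real_inner_self_eq_norm_sq] at h2
  rw [← Lp.norm_toLp p hp, h2]
  refine integral_congr_ae ?_
  filter_upwards [hp.coeFn_toLp] with a ha
  simp [ha, RCLike.inner_apply, sq]

lemma integral_mul_le_CS {p q : α → ℝ} (hp : MemLp p 2 ν) (hq : MemLp q 2 ν) :
    ∫ a, p a * q a ∂ν ≤ (eLpNorm p 2 ν).toReal * (eLpNorm q 2 ν).toReal := by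
  have h := real_inner_le_norm (hp.toLp p) (hq.toLp q)
  rw [L2.inner_def] at h
  rw [Lp.norm_toLp p hp, Lp.norm_toLp q hq] at h
  refine le_trans (le_of_eq ?_) h
  refine integral_congr_ae ?_
  filter_upwards [hp.coeFn_toLp, hq.coeFn_toLp] with a ha hb
  simp [ha, hb, RCLike.inner_apply, mul_comm]

lemma sq_integral_mul_le {p q : α → ℝ} (hp : MemLp p 2 ν) (hq : MemLp q 2 ν) :
    (∫ a, p a * q a ∂ν) ^ 2 ≤ (∫ a, p a ^ 2 ∂ν) * (∫ a, q a ^ 2 ∂ν) := by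
  have h1 := integral_mul_le_CS hp hq
  have h2 := integral_mul_le_CS hp.neg hq
  have h3 : ∫ a, (-p) a * q a ∂ν = -∫ a, p a * q a ∂ν := by
    simp [neg_mul, integral_neg]
  rw [h3, eLpNorm_neg] at h2
  have h4 := sq_le_sq' (by linarith) h1
  calc (∫ a, p a * q a ∂ν) ^ 2 ≤ ((eLpNorm p 2 ν).toReal * (eLpNorm q 2 ν).toReal) ^ 2 := h4
    _ = (∫ a, p a ^ 2 ∂ν) * (∫ a, q a ^ 2 ∂ν) := by
        rw [mul_pow, sq_eLpNorm_eq hp, sq_eLpNorm_eq hq]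

variable {Ω : Type*} [MeasurableSpace Ω] {μ : Measure Ω} [SigmaFinite μ]

lemma prod_memℒp {f g : Ω → ℝ} (hfm : Measurable f) (hgm : Measurable g)
    (hf : MemLp f 2 μ) (hg : MemLp g 2 μ) :
    MemLp (fun p : Ω × Ω => f p.1 * g p.2) 2 (μ.prod μ) := by
  have hm : Measurable (fun p : Ω × Ω => f p.1 * g p.2) :=
    (hfm.comp measurable_fst).mul (hgm.comp measurable_snd)
  rw [memLp_two_iff_integrable_sq hm.aestronglyMeasurable]
  have := hf.integrable_sq.mul_prod hg.integrable_sq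
  refine this.congr (Filter.Eventually.of_forall fun p => ?_)
  ring

lemma bilin_integrable {V : Ω → Ω → ℝ} (hV2 : MemLp (uncurry V) 2 (μ.prod μ))
    {f g : Ω → ℝ} (hfm : Measurable f) (hgm : Measurable g)
    (hf : MemLp f 2 μ) (hg : MemLp g 2 μ) :
    Integrable (fun p : Ω × Ω => f p.1 * V p.1 p.2 * g p.2) (μ.prod μ) := by
  have := int_mul_mem (prod_memℒp hfm hgm hf hg) hV2
  refine this.congr (Filter.Eventually.of_forall fun p => ?_)
  simp only [uncurry]
  ring

lemma bilin_eq_prod {V : Ω → Ω → ℝ} (hV2 : MemLp (uncurry V) 2 (μ.prod μ))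
    {f g : Ω → ℝ} (hfm : Measurable f) (hgm : Measurable g)
    (hf : MemLp f 2 μ) (hg : MemLp g 2 μ) :
    ∫ x, ∫ y, f x * V x y * g y ∂μ ∂μ
      = ∫ p : Ω × Ω, f p.1 * V p.1 p.2 * g p.2 ∂(μ.prod μ) :=
  integral_integral (bilin_integrable hV2 hfm hgm hf hg)

lemma bilin_swap {V : Ω → Ω → ℝ} (hV2 : MemLp (uncurry V) 2 (μ.prod μ))
    {f g : Ω → ℝ} (hfm : Measurable f) (hgm : Measurable g)
    (hf : MemLp f 2 μ) (hg : MemLp g 2 μ) :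
    ∫ x, ∫ y, f x * V x y * g y ∂μ ∂μ = ∫ y, ∫ x, f x * V x y * g y ∂μ ∂μ :=
  integral_integral_swap (bilin_integrable hV2 hfm hgm hf hg)

lemma prod_eLpNorm_toReal {f g : Ω → ℝ} (hfm : Measurable f) (hgm : Measurable g)
    (hf : MemLp f 2 μ) (hg : MemLp g 2 μ) :
    (eLpNorm (fun p : Ω × Ω => f p.1 * g p.2) 2 (μ.prod μ)).toReal
      = (eLpNorm f 2 μ).toReal * (eLpNorm g 2 μ).toReal := by
  have hpm := prod_memℒp hfm hgm hf hg
  have h1 : ((eLpNorm (fun p : Ω × Ω => f p.1 * g p.2) 2 (μ.prod μ)).toReal) ^ 2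
      = ((eLpNorm f 2 μ).toReal * (eLpNorm g 2 μ).toReal) ^ 2 := by
    rw [sq_eLpNorm_eq hpm, mul_pow, sq_eLpNorm_eq hf, sq_eLpNorm_eq hg]
    rw [← integral_prod_mul (f := fun x => f x ^ 2) (g := fun y => g y ^ 2)]
    exact integral_congr_ae (Filter.Eventually.of_forall fun p => by ring)
  have h2 : (0:ℝ) ≤ (eLpNorm (fun p : Ω × Ω => f p.1 * g p.2) 2 (μ.prod μ)).toReal :=
    ENNReal.toReal_nonneg
  have h3 : (0:ℝ) ≤ (eLpNorm f 2 μ).toReal * (eLpNorm g 2 μ).toReal :=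
    mul_nonneg ENNReal.toReal_nonneg ENNReal.toReal_nonneg
  nlinarith


lemma bilin_CS {V : Ω → Ω → ℝ} (hV2 : MemLp (uncurry V) 2 (μ.prod μ))
    {f g : Ω → ℝ} (hfm : Measurable f) (hgm : Measurable g)
    (hf : MemLp f 2 μ) (hg : MemLp g 2 μ) :
    ∫ p : Ω × Ω, f p.1 * V p.1 p.2 * g p.2 ∂(μ.prod μ)
      ≤ (eLpNorm f 2 μ).toReal * (eLpNorm g 2 μ).toReal
        * (eLpNorm (uncurry V) 2 (μ.prod μ)).toReal := by
  have h1 : ∫ p : Ω × Ω, f p.1 * V p.1 p.2 * g p.2 ∂(μ.prod μ)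
      = ∫ p : Ω × Ω, (f p.1 * g p.2) * uncurry V p ∂(μ.prod μ) :=
    integral_congr_ae (Filter.Eventually.of_forall fun p => by simp only [uncurry]; ring)
  rw [h1, ← prod_eLpNorm_toReal hfm hgm hf hg]
  exact integral_mul_le_CS (prod_memℒp hfm hgm hf hg) hV2

/-- The integral operator with kernel `U`. -/
noncomputable def Top (μ : Measure Ω) (U : Ω → Ω → ℝ) (g : Ω → ℝ) : Ω → ℝ :=
  fun a => ∫ b, U a b * g b ∂μ

lemma Top_meas {U : Ω → Ω → ℝ} (hmeas : Measurable (uncurry U))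
    {g : Ω → ℝ} (hgm : Measurable g) : Measurable (Top μ U g) := by
  have : Measurable (fun p : Ω × Ω => U p.1 p.2 * g p.2) :=
    hmeas.mul (hgm.comp measurable_snd)
  exact this.stronglyMeasurable.integral_prod_right'.measurable

lemma slice_memℒp {U : Ω → Ω → ℝ} (hmeas : Measurable (uncurry U))
    (hU2 : MemLp (uncurry U) 2 (μ.prod μ)) :
    ∀ᵐ x ∂μ, MemLp (U x) 2 μ := by
  have h2 : Integrable (fun z : Ω × Ω => (U z.1 z.2) ^ 2) (μ.prod μ) :=
    (memLp_two_iff_integrable_sq hU2.aestronglyMeasurable).mp hU2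
  filter_upwards [h2.prod_right_ae] with x hx
  refine (memLp_two_iff_integrable_sq ?_).mpr hx
  exact (hmeas.comp measurable_prodMk_left).aestronglyMeasurable

lemma sqint_integrable {U : Ω → Ω → ℝ}
    (hU2 : MemLp (uncurry U) 2 (μ.prod μ)) :
    Integrable (fun a => ∫ b, (U a b) ^ 2 ∂μ) μ := by
  have h2 : Integrable (fun z : Ω × Ω => (U z.1 z.2) ^ 2) (μ.prod μ) :=
    (memLp_two_iff_integrable_sq hU2.aestronglyMeasurable).mp hU2
  exact h2.integral_prod_left

lemma Top_memℒp {U : Ω → Ω → ℝ} (hmeas : Measurable (uncurry U))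
    (hU2 : MemLp (uncurry U) 2 (μ.prod μ))
    {g : Ω → ℝ} (hgm : Measurable g) (hg : MemLp g 2 μ) :
    MemLp (Top μ U g) 2 μ := by
  rw [memLp_two_iff_integrable_sq (Top_meas hmeas hgm).aestronglyMeasurable]
  refine Integrable.mono' ((sqint_integrable hU2).mul_const (∫ b, g b ^ 2 ∂μ))
    ((Top_meas hmeas hgm).pow_const 2).aestronglyMeasurable ?_
  filter_upwards [slice_memℒp hmeas hU2] with a ha
  rw [Real.norm_eq_abs, abs_of_nonneg (sq_nonneg _)]
  exact sq_integral_mul_le ha hg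


def S (μ : Measure Ω) (U : Ω → Ω → ℝ) : Set ℝ :=
  {r : ℝ | ∃ f g : Ω → ℝ, Measurable f ∧ Measurable g ∧
    eLpNorm f 2 μ = 1 ∧ eLpNorm g 2 μ = 1 ∧
    r = ∫ x, ∫ y, f x * U x y * g y ∂μ ∂μ}

lemma kernelNorm_eq (μ : Measure Ω) (U : Ω → Ω → ℝ) :
    kernelNorm μ U = sSup (S μ U) := rfl

lemma memℒp_of_norm_one {f : Ω → ℝ} (hfm : Measurable f) (hf1 : eLpNorm f 2 μ = 1) :
    MemLp f 2 μ :=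
  ⟨hfm.aestronglyMeasurable, by rw [hf1]; exact ENNReal.one_lt_top⟩

lemma S_le {U : Ω → Ω → ℝ} (hU2 : MemLp (uncurry U) 2 (μ.prod μ)) :
    ∀ r ∈ S μ U, r ≤ (eLpNorm (uncurry U) 2 (μ.prod μ)).toReal := by
  rintro r ⟨f, g, hfm, hgm, hf1, hg1, rfl⟩
  have hf := memℒp_of_norm_one hfm hf1
  have hg := memℒp_of_norm_one hgm hg1
  rw [bilin_eq_prod hU2 hfm hgm hf hg]
  have h := bilin_CS hU2 hfm hgm hf hg
  rw [hf1, hg1] at h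
  simpa using h

lemma S_bddAbove {U : Ω → Ω → ℝ} (hU2 : MemLp (uncurry U) 2 (μ.prod μ)) :
    BddAbove (S μ U) :=
  ⟨_, fun _ hr => S_le hU2 _ hr⟩

lemma S_neg_mem {U : Ω → Ω → ℝ} {r : ℝ} (hr : r ∈ S μ U) : -r ∈ S μ U := by
  obtain ⟨f, g, hfm, hgm, hf1, hg1, rfl⟩ := hr
  refine ⟨-f, g, hfm.neg, hgm, by rw [eLpNorm_neg]; exact hf1, hg1, ?_⟩
  simp [neg_mul, integral_neg]

lemma K_nonneg {U : Ω → Ω → ℝ} (hU2 : MemLp (uncurry U) 2 (μ.prod μ)) :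
    0 ≤ kernelNorm μ U := by
  rcases (S μ U).eq_empty_or_nonempty with h | ⟨r, hr⟩
  · rw [kernelNorm_eq, h, Real.sSup_empty]
  · have h1 := le_csSup (S_bddAbove hU2) hr
    have h2 := le_csSup (S_bddAbove hU2) (S_neg_mem hr)
    rw [kernelNorm_eq]
    linarith

lemma bilin_le_K {U : Ω → Ω → ℝ} (hU2 : MemLp (uncurry U) 2 (μ.prod μ))
    {f g : Ω → ℝ} (hfm : Measurable f) (hgm : Measurable g)
    (hf : MemLp f 2 μ) (hg : MemLp g 2 μ) :
    ∫ x, ∫ y, f x * U x y * g y ∂μ ∂μ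
      ≤ kernelNorm μ U * (eLpNorm f 2 μ).toReal * (eLpNorm g 2 μ).toReal := by
  rcases eq_or_ne (eLpNorm f 2 μ) 0 with h0 | h0
  · have hf0 : f =ᵐ[μ] 0 := (eLpNorm_eq_zero_iff hf.aestronglyMeasurable two_ne_zero).mp h0
    have : ∫ x, ∫ y, f x * U x y * g y ∂μ ∂μ = 0 := by
      rw [← integral_zero Ω ℝ (μ := μ)]
      refine integral_congr_ae ?_
      filter_upwards [hf0] with x hx
      simp [hx]
    rw [this, h0]
    simp
  rcases eq_or_ne (eLpNorm g 2 μ) 0 with h0g | h0g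
  · have hg0 : g =ᵐ[μ] 0 := (eLpNorm_eq_zero_iff hg.aestronglyMeasurable two_ne_zero).mp h0g
    have : ∫ x, ∫ y, f x * U x y * g y ∂μ ∂μ = 0 := by
      rw [← integral_zero Ω ℝ (μ := μ)]
      refine integral_congr_ae (Filter.Eventually.of_forall fun x => ?_)
      rw [← integral_zero Ω ℝ (μ := μ)]
      refine integral_congr_ae ?_
      filter_upwards [hg0] with y hy
      simp [hy]
    rw [this, h0g]
    simp
  · set A := (eLpNorm f 2 μ).toReal with hA
    set B := (eLpNorm g 2 μ).toReal with hB
    have hApos : 0 < A := ENNReal.toReal_pos h0 hf.eLpNorm_ne_top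
    have hBpos : 0 < B := ENNReal.toReal_pos h0g hg.eLpNorm_ne_top
    have hnorm : ∀ (h : Ω → ℝ), MemLp h 2 μ → eLpNorm h 2 μ ≠ 0 →
        eLpNorm (fun x => ((eLpNorm h 2 μ).toReal)⁻¹ * h x) 2 μ = 1 := by
      intro h hmem hne
      have : (fun x => ((eLpNorm h 2 μ).toReal)⁻¹ * h x)
          = ((eLpNorm h 2 μ).toReal)⁻¹ • h := rfl
      rw [this, eLpNorm_const_smul]
      have hpos : 0 < (eLpNorm h 2 μ).toReal := ENNReal.toReal_pos hne hmem.eLpNorm_ne_top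
      rw [Real.enorm_eq_ofReal (by positivity), ENNReal.ofReal_inv_of_pos hpos,
        ENNReal.ofReal_toReal hmem.eLpNorm_ne_top]
      exact ENNReal.inv_mul_cancel hne hmem.eLpNorm_ne_top
    have hmemS : (∫ x, ∫ y, (A⁻¹ * f x) * U x y * (B⁻¹ * g y) ∂μ ∂μ) ∈ S μ U := by
      exact ⟨_, _, (measurable_const.mul hfm), (measurable_const.mul hgm),
        hnorm f hf h0, hnorm g hg h0g, rfl⟩
    have hle := le_csSup (S_bddAbove hU2) hmemS
    have heq : ∫ x, ∫ y, (A⁻¹ * f x) * U x y * (B⁻¹ * g y) ∂μ ∂μ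
        = A⁻¹ * (B⁻¹ * ∫ x, ∫ y, f x * U x y * g y ∂μ ∂μ) := by
      simp_rw [show ∀ x y, A⁻¹ * f x * U x y * (B⁻¹ * g y)
          = A⁻¹ * (B⁻¹ * (f x * U x y * g y)) from fun x y => by ring, integral_const_mul]
    rw [heq, ← kernelNorm_eq] at hle
    have := mul_le_mul_of_nonneg_left hle (le_of_lt (mul_pos hApos hBpos))
    calc ∫ x, ∫ y, f x * U x y * g y ∂μ ∂μ
        = (A * B) * (A⁻¹ * (B⁻¹ * ∫ x, ∫ y, f x * U x y * g y ∂μ ∂μ)) := by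
          field_simp
      _ ≤ (A * B) * kernelNorm μ U := this
      _ = kernelNorm μ U * A * B := by ring


lemma Top_sq_le_K {U : Ω → Ω → ℝ} (hmeas : Measurable (uncurry U))
    (hU2 : MemLp (uncurry U) 2 (μ.prod μ))
    {g : Ω → ℝ} (hgm : Measurable g) (hg : MemLp g 2 μ) :
    ∫ a, (Top μ U g a) ^ 2 ∂μ ≤ (kernelNorm μ U) ^ 2 * ∫ b, g b ^ 2 ∂μ := by
  have hTm : Measurable (Top μ U g) := Top_meas hmeas hgm
  have hT : MemLp (Top μ U g) 2 μ := Top_memℒp hmeas hU2 hgm hg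
  set C := (eLpNorm (Top μ U g) 2 μ).toReal with hC
  set G := (eLpNorm g 2 μ).toReal with hG
  have hX : ∫ a, (Top μ U g a) ^ 2 ∂μ = C ^ 2 := (sq_eLpNorm_eq hT).symm
  have hGX : ∫ b, g b ^ 2 ∂μ = G ^ 2 := (sq_eLpNorm_eq hg).symm
  have hform : ∫ a, (Top μ U g a) ^ 2 ∂μ = ∫ a, ∫ b, Top μ U g a * U a b * g b ∂μ ∂μ := by
    refine integral_congr_ae (Filter.Eventually.of_forall fun a => ?_)
    dsimp only
    rw [sq]
    simp_rw [mul_assoc, integral_const_mul]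
    rfl
  have key : C ^ 2 ≤ kernelNorm μ U * C * G := by
    rw [← hX, hform]
    exact bilin_le_K hU2 hTm hgm hT hg
  have hK0 : 0 ≤ kernelNorm μ U := K_nonneg hU2
  have hC0 : (0:ℝ) ≤ C := ENNReal.toReal_nonneg
  have hG0 : (0:ℝ) ≤ G := ENNReal.toReal_nonneg
  rw [hX, hGX]
  nlinarith [sq_nonneg (kernelNorm μ U * G - C)]

lemma Top_Top_eq {U : Ω → Ω → ℝ} (hmeas : Measurable (uncurry U))
    (hsymm : ∀ x y, U x y = U y x) (hU2 : MemLp (uncurry U) 2 (μ.prod μ))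
    {g : Ω → ℝ} (hgm : Measurable g) (hg : MemLp g 2 μ)
    {b : Ω} (hb : MemLp (U b) 2 μ) :
    Top μ U (Top μ U g) b = ∫ c, (∫ a, U a b * U a c ∂μ) * g c ∂μ := by
  have hUb : Measurable (U b) := hmeas.comp measurable_prodMk_left
  have h1 : Top μ U (Top μ U g) b = ∫ a, ∫ c, U b a * U a c * g c ∂μ ∂μ := by
    show ∫ a, U b a * Top μ U g a ∂μ = _
    refine integral_congr_ae (Filter.Eventually.of_forall fun a => ?_)
    show U b a * ∫ c, U a c * g c ∂μ = _
    simp_rw [mul_assoc, integral_const_mul]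
  rw [h1, bilin_swap hU2 hUb hgm hb hg]
  refine integral_congr_ae (Filter.Eventually.of_forall fun c => ?_)
  dsimp only
  rw [← integral_mul_const]
  refine integral_congr_ae (Filter.Eventually.of_forall fun a => ?_)
  dsimp only
  rw [hsymm b a]

/-- The kernel of the square of the integral operator. -/
noncomputable def Wk (μ : Measure Ω) (U : Ω → Ω → ℝ) : Ω → Ω → ℝ :=
  fun y z => ∫ a, U a y * U a z ∂μ

lemma Wk_meas {U : Ω → Ω → ℝ} (hmeas : Measurable (uncurry U)) :
    Measurable (uncurry (Wk μ U)) := by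
  have h : Measurable (fun q : (Ω × Ω) × Ω => U q.2 q.1.1 * U q.2 q.1.2) :=
    (hmeas.comp (measurable_snd.prodMk measurable_fst.fst)).mul
      (hmeas.comp (measurable_snd.prodMk measurable_fst.snd))
  exact h.stronglyMeasurable.integral_prod_right'.measurable

lemma Wk_symm {U : Ω → Ω → ℝ} (y z : Ω) : Wk μ U y z = Wk μ U z y :=
  integral_congr_ae (Filter.Eventually.of_forall fun a => mul_comm _ _)

lemma Wk_row {U : Ω → Ω → ℝ} (hsymm : ∀ x y, U x y = U y x) (x : Ω) :
    (fun z => Wk μ U x z) = Top μ U (U x) := by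
  funext z
  show ∫ a, U a x * U a z ∂μ = ∫ b, U z b * U x b ∂μ
  simp_rw [hsymm z, hsymm x]
  exact integral_congr_ae (Filter.Eventually.of_forall fun a => mul_comm _ _)

lemma col_slice_memℒp {U : Ω → Ω → ℝ} (hmeas : Measurable (uncurry U))
    (hsymm : ∀ x y, U x y = U y x) (hU2 : MemLp (uncurry U) 2 (μ.prod μ)) :
    ∀ᵐ y ∂μ, MemLp (fun a => U a y) 2 μ := by
  filter_upwards [slice_memℒp hmeas hU2] with y hy
  have : (fun a => U a y) = U y := funext fun a => hsymm a y
  rw [this]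
  exact hy

lemma Wk_memℒp {U : Ω → Ω → ℝ} (hmeas : Measurable (uncurry U))
    (hsymm : ∀ x y, U x y = U y x) (hU2 : MemLp (uncurry U) 2 (μ.prod μ)) :
    MemLp (uncurry (Wk μ U)) 2 (μ.prod μ) := by
  rw [memLp_two_iff_integrable_sq (Wk_meas hmeas).aestronglyMeasurable]
  have h2 : Integrable (fun z : Ω × Ω => (U z.1 z.2) ^ 2) (μ.prod μ) :=
    (memLp_two_iff_integrable_sq hU2.aestronglyMeasurable).mp hU2
  have hs : Integrable (fun y => ∫ a, (U a y) ^ 2 ∂μ) μ := h2.integral_prod_right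
  refine Integrable.mono' (hs.mul_prod hs)
    (((Wk_meas hmeas).pow_const 2).aestronglyMeasurable) ?_
  have h1 : ∀ᵐ p : Ω × Ω ∂μ.prod μ, MemLp (fun a => U a p.1) 2 μ :=
    Measure.quasiMeasurePreserving_fst.ae (col_slice_memℒp hmeas hsymm hU2)
  have hh2 : ∀ᵐ p : Ω × Ω ∂μ.prod μ, MemLp (fun a => U a p.2) 2 μ :=
    Measure.quasiMeasurePreserving_snd.ae (col_slice_memℒp hmeas hsymm hU2)
  filter_upwards [h1, hh2] with p hp1 hp2
  rw [Real.norm_eq_abs, abs_of_nonneg (sq_nonneg _)]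
  exact sq_integral_mul_le hp1 hp2


lemma t_eq {U : Ω → Ω → ℝ} (hmeas : Measurable (uncurry U))
    (hsymm : ∀ x y, U x y = U y x) (hU2 : MemLp (uncurry U) 2 (μ.prod μ)) :
    (∫ x, ∫ y, ∫ z, ∫ w, U x y * U y z * U z w * U w x ∂μ ∂μ ∂μ ∂μ)
      = ∫ x, ∫ z, (Wk μ U x z) ^ 2 ∂μ ∂μ := by
  refine integral_congr_ae ?_
  filter_upwards [slice_memℒp hmeas hU2] with x hx
  have hUx : Measurable (U x) := hmeas.comp measurable_prodMk_left
  have hgeq : (fun z => Wk μ U z x) = Top μ U (U x) := by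
    funext z
    rw [Wk_symm]
    exact congrFun (Wk_row hsymm x) z
  have hgm : Measurable (fun z => Wk μ U z x) := by
    rw [hgeq]; exact Top_meas hmeas hUx
  have hgmem : MemLp (fun z => Wk μ U z x) 2 μ := by
    rw [hgeq]; exact Top_memℒp hmeas hU2 hUx hx
  have hR : ∀ z, (∫ w, U z w * U w x ∂μ) = Wk μ U z x := fun z =>
    integral_congr_ae (Filter.Eventually.of_forall fun w => by dsimp only; rw [hsymm z w])
  have h1 : (∫ y, ∫ z, ∫ w, U x y * U y z * U z w * U w x ∂μ ∂μ ∂μ)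
      = ∫ y, ∫ z, U x y * U y z * Wk μ U z x ∂μ ∂μ := by
    refine integral_congr_ae (Filter.Eventually.of_forall fun y => ?_)
    dsimp only
    refine integral_congr_ae (Filter.Eventually.of_forall fun z => ?_)
    dsimp only
    simp_rw [show ∀ w, U x y * U y z * U z w * U w x
      = (U x y * U y z) * (U z w * U w x) from fun w => by ring, integral_const_mul, hR z]
  calc (∫ y, ∫ z, ∫ w, U x y * U y z * U z w * U w x ∂μ ∂μ ∂μ)
      = ∫ y, ∫ z, U x y * U y z * Wk μ U z x ∂μ ∂μ := h1
    _ = ∫ z, ∫ y, U x y * U y z * Wk μ U z x ∂μ ∂μ :=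
        bilin_swap hU2 hUx hgm hx hgmem
    _ = ∫ z, (Wk μ U x z) ^ 2 ∂μ := by
        refine integral_congr_ae (Filter.Eventually.of_forall fun z => ?_)
        dsimp only
        rw [integral_mul_const]
        have h2 : (∫ y, U x y * U y z ∂μ) = Wk μ U x z :=
          integral_congr_ae (Filter.Eventually.of_forall fun y => by dsimp only; rw [hsymm x y])
        rw [h2, Wk_symm, sq]

end Stmt2Aux

open Function Stmt2Aux

/-- For a symmetric measurable square-integrable kernel `U` on a σ-finite
measure space, `‖U‖_{2→2}⁴ ≤ t(C₄, U) ≤ ‖U‖_{2→2}² ‖U‖₂²`, where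
`t(C₄,U) = ∫∫∫∫ U(x,y) U(y,z) U(z,w) U(w,x) dμ⁴`. -/
theorem stmt2 {Ω : Type*} [MeasurableSpace Ω] (μ : Measure Ω) [SigmaFinite μ]
    (U : Ω → Ω → ℝ) (hmeas : Measurable (Function.uncurry U))
    (hsymm : ∀ x y, U x y = U y x)
    (hU2 : MemLp (Function.uncurry U) 2 (μ.prod μ)) :
    kernelNorm μ U ^ 4 ≤
      (∫ x, ∫ y, ∫ z, ∫ w, U x y * U y z * U z w * U w x ∂μ ∂μ ∂μ ∂μ) ∧
    (∫ x, ∫ y, ∫ z, ∫ w, U x y * U y z * U z w * U w x ∂μ ∂μ ∂μ ∂μ) ≤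
      kernelNorm μ U ^ 2 * (eLpNorm (Function.uncurry U) 2 (μ.prod μ)).toReal ^ 2 := by
  have hK0 : 0 ≤ kernelNorm μ U := K_nonneg hU2
  have hWm : Measurable (uncurry (Wk μ U)) := Wk_meas hmeas
  have hW2 : MemLp (uncurry (Wk μ U)) 2 (μ.prod μ) := Wk_memℒp hmeas hsymm hU2
  have hW2sq : Integrable (fun p : Ω × Ω => (Wk μ U p.1 p.2) ^ 2) (μ.prod μ) :=
    (memLp_two_iff_integrable_sq hW2.aestronglyMeasurable).mp hW2
  have htEq := t_eq hmeas hsymm hU2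
  set t := ∫ x, ∫ y, ∫ z, ∫ w, U x y * U y z * U z w * U w x ∂μ ∂μ ∂μ ∂μ with ht
  have htProd : t = ∫ p : Ω × Ω, (Wk μ U p.1 p.2) ^ 2 ∂(μ.prod μ) :=
    htEq.trans (integral_integral hW2sq)
  have htD : t = ((eLpNorm (uncurry (Wk μ U)) 2 (μ.prod μ)).toReal) ^ 2 :=
    htProd.trans (sq_eLpNorm_eq hW2).symm
  have htnn : 0 ≤ t := htProd ▸ integral_nonneg fun p => sq_nonneg _
  set c := Real.sqrt (Real.sqrt t) with hc
  have hc0 : 0 ≤ c := Real.sqrt_nonneg _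
  have hc4 : c ^ 4 = t := by
    rw [show (4:ℕ) = 2 * 2 from rfl, pow_mul, Real.sq_sqrt (Real.sqrt_nonneg t),
      Real.sq_sqrt htnn]
  have hrle : ∀ r ∈ S μ U, r ≤ c := by
    rintro r ⟨f, g, hfm, hgm, hf1, hg1, rfl⟩
    have hf := memℒp_of_norm_one hfm hf1
    have hg := memℒp_of_norm_one hgm hg1
    have hTm : Measurable (Top μ U g) := Top_meas hmeas hgm
    have hT : MemLp (Top μ U g) 2 μ := Top_memℒp hmeas hU2 hgm hg
    have hrEq : ∫ x, ∫ y, f x * U x y * g y ∂μ ∂μ = ∫ x, f x * Top μ U g x ∂μ := by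
      refine integral_congr_ae (Filter.Eventually.of_forall fun x => ?_)
      try dsimp only
      simp_rw [mul_assoc, integral_const_mul]
      rfl
    set C := (eLpNorm (Top μ U g) 2 μ).toReal with hC
    have hCle : ∫ x, f x * Top μ U g x ∂μ ≤ C := by
      have h := integral_mul_le_CS hf hT
      rw [hf1] at h
      simpa using h
    have hCge : -(∫ x, f x * Top μ U g x ∂μ) ≤ C := by
      have h := integral_mul_le_CS hf.neg hT
      rw [eLpNorm_neg, hf1] at h
      have he : ∫ x, (-f) x * Top μ U g x ∂μ = -∫ x, f x * Top μ U g x ∂μ := by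
        simp [neg_mul, integral_neg]
      rw [he] at h
      simpa using h
    set X := ∫ a, (Top μ U g a) ^ 2 ∂μ with hXdef
    have hCX : C ^ 2 = X := sq_eLpNorm_eq hT
    have hXnn : 0 ≤ X := integral_nonneg fun a => sq_nonneg _
    have hr2 : (∫ x, ∫ y, f x * U x y * g y ∂μ ∂μ) ^ 2 ≤ X := by
      rw [hrEq, ← hCX]
      exact sq_le_sq' (by linarith) hCle
    -- X ≤ toReal ‖W‖
    set D := (eLpNorm (uncurry (Wk μ U)) 2 (μ.prod μ)).toReal with hD
    have hXle : X ≤ D := by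
      have step1 : X = ∫ a, ∫ b, Top μ U g a * U a b * g b ∂μ ∂μ := by
        refine integral_congr_ae (Filter.Eventually.of_forall fun a => ?_)
        try dsimp only
        rw [sq]
        simp_rw [mul_assoc, integral_const_mul]
        rfl
      have step2 : ∫ a, ∫ b, Top μ U g a * U a b * g b ∂μ ∂μ
          = ∫ b, ∫ a, Top μ U g a * U a b * g b ∂μ ∂μ :=
        bilin_swap hU2 hTm hgm hT hg
      have step3 : ∫ b, ∫ a, Top μ U g a * U a b * g b ∂μ ∂μ
          = ∫ b, Top μ U (Top μ U g) b * g b ∂μ := by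
        refine integral_congr_ae (Filter.Eventually.of_forall fun b => ?_)
        try dsimp only
        have hTT : Top μ U (Top μ U g) b * g b
            = (∫ a, U b a * Top μ U g a ∂μ) * g b := rfl
        rw [hTT, ← integral_mul_const]
        refine integral_congr_ae (Filter.Eventually.of_forall fun a => ?_)
        try dsimp only
        rw [hsymm a b, mul_comm (Top μ U g a) (U b a)]
      have step4 : ∫ b, Top μ U (Top μ U g) b * g b ∂μ
          = ∫ b, ∫ e, g b * Wk μ U b e * g e ∂μ ∂μ := by
        refine integral_congr_ae ?_
        filter_upwards [slice_memℒp hmeas hU2] with b hb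
        try dsimp only
        rw [Top_Top_eq hmeas hsymm hU2 hgm hg hb, ← integral_mul_const]
        refine integral_congr_ae (Filter.Eventually.of_forall fun e => ?_)
        try dsimp only
        have hWe : Wk μ U b e = ∫ a, U a b * U a e ∂μ := rfl
        rw [hWe]
        ring
      have step5 : ∫ b, ∫ e, g b * Wk μ U b e * g e ∂μ ∂μ
          = ∫ p : Ω × Ω, g p.1 * Wk μ U p.1 p.2 * g p.2 ∂(μ.prod μ) :=
        bilin_eq_prod hW2 hgm hgm hg hg
      have step6 := bilin_CS hW2 hgm hgm hg hg
      rw [hg1] at step6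
      rw [step1, step2, step3, step4, step5]
      simpa using step6
    have hX2 : X ^ 2 ≤ t := by
      have := pow_le_pow_left₀ hXnn hXle 2
      rw [htD]
      exact this
    have hr4 : (∫ x, ∫ y, f x * U x y * g y ∂μ ∂μ) ^ 4 ≤ t := by
      calc (∫ x, ∫ y, f x * U x y * g y ∂μ ∂μ) ^ 4
          = ((∫ x, ∫ y, f x * U x y * g y ∂μ ∂μ) ^ 2) ^ 2 := by ring
        _ ≤ X ^ 2 := pow_le_pow_left₀ (sq_nonneg _) hr2 2
        _ ≤ t := hX2
    have habs : |∫ x, ∫ y, f x * U x y * g y ∂μ ∂μ| ≤ c := by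
      refine le_of_pow_le_pow_left₀ (n := 4) (by norm_num) hc0 ?_
      calc |∫ x, ∫ y, f x * U x y * g y ∂μ ∂μ| ^ 4
          = (∫ x, ∫ y, f x * U x y * g y ∂μ ∂μ) ^ 4 := by
            rw [← abs_pow, abs_of_nonneg]
            nlinarith [sq_nonneg ((∫ x, ∫ y, f x * U x y * g y ∂μ ∂μ) ^ 2)]
        _ ≤ t := hr4
        _ = c ^ 4 := hc4.symm
    exact le_trans (le_abs_self _) habs
  have hKc : kernelNorm μ U ≤ c := by
    rw [kernelNorm_eq]
    exact Real.sSup_le hrle hc0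
  constructor
  · calc kernelNorm μ U ^ 4 ≤ c ^ 4 := pow_le_pow_left₀ hK0 hKc 4
      _ = t := hc4
  · have hU2sq : Integrable (fun p : Ω × Ω => (U p.1 p.2) ^ 2) (μ.prod μ) :=
      (memLp_two_iff_integrable_sq hU2.aestronglyMeasurable).mp hU2
    have hup1 : ∀ᵐ x ∂μ, ∫ z, (Wk μ U x z) ^ 2 ∂μ
        ≤ kernelNorm μ U ^ 2 * ∫ b, (U x b) ^ 2 ∂μ := by
      filter_upwards [slice_memℒp hmeas hU2] with x hx
      have hrow := Wk_row (μ := μ) hsymm x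
      calc ∫ z, (Wk μ U x z) ^ 2 ∂μ = ∫ z, (Top μ U (U x) z) ^ 2 ∂μ := by
            refine integral_congr_ae (Filter.Eventually.of_forall fun z => ?_)
            try dsimp only
            rw [congrFun hrow z]
        _ ≤ kernelNorm μ U ^ 2 * ∫ b, (U x b) ^ 2 ∂μ := Top_sq_le_K hmeas hU2
            (hmeas.comp measurable_prodMk_left) hx
    have hint : Integrable (fun x => ∫ b, (U x b) ^ 2 ∂μ) μ := sqint_integrable hU2
    calc t = ∫ x, ∫ z, (Wk μ U x z) ^ 2 ∂μ ∂μ := htEq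
      _ ≤ ∫ x, kernelNorm μ U ^ 2 * ∫ b, (U x b) ^ 2 ∂μ ∂μ :=
          integral_mono_of_nonneg
            (Filter.Eventually.of_forall fun x => integral_nonneg fun z => sq_nonneg _)
            (hint.const_mul _) hup1
      _ = kernelNorm μ U ^ 2 * ∫ x, ∫ b, (U x b) ^ 2 ∂μ ∂μ := integral_const_mul _ _
      _ = kernelNorm μ U ^ 2 * ∫ p : Ω × Ω, (U p.1 p.2) ^ 2 ∂(μ.prod μ) := by
          rw [integral_integral hU2sq]
      _ = kernelNorm μ U ^ 2 * (eLpNorm (Function.uncurry U) 2 (μ.prod μ)).toReal ^ 2 := by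
          rw [sq_eLpNorm_eq hU2]
          exact congrArg _ (integral_congr_ae (Filter.Eventually.of_forall fun p => rfl))
end

section
/- Let Ω and Ω' be σ-finite measure spaces and φ : Ω' → Ω a measure-preserving map. If U : Ω × Ω → ℝ is integrable, then ‖U‖_□ = ‖U^φ‖_□, where ‖U‖_□ = sup over pairs of measurable sets S, T of |∫_{S×T} U dμ×dμ|. -/
open MeasureTheory ENNReal

/-- The cut norm of an integrable kernel `U` on `Ω × Ω`:
`‖U‖_□ = sup_{S, T measurable} |∫_{S×T} U dμ dμ|`. -/
noncomputable def cutNorm {Ω : Type*} [MeasurableSpace Ω] (μ : Measure Ω)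
    (U : Ω → Ω → ℝ) : ℝ :=
  sSup {r : ℝ | ∃ S T : Set Ω, MeasurableSet S ∧ MeasurableSet T ∧
    r = |∫ x in S, ∫ y in T, U x y ∂μ ∂μ|}

section Aux

open Function Measure Set

variable {Ω : Type*} [MeasurableSpace Ω] {μ : Measure Ω} [SigmaFinite μ]
variable {U : Ω → Ω → ℝ}

/-- The set whose supremum is the cut norm. -/
def cutSet (μ : Measure Ω) (U : Ω → Ω → ℝ) : Set ℝ :=
  {r : ℝ | ∃ S T : Set Ω, MeasurableSet S ∧ MeasurableSet T ∧
    r = |∫ x in S, ∫ y in T, U x y ∂μ ∂μ|}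

lemma cutNorm_eq_sSup (μ : Measure Ω) (U : Ω → Ω → ℝ) : cutNorm μ U = sSup (cutSet μ U) := rfl

lemma cutSet_nonempty (μ : Measure Ω) (U : Ω → Ω → ℝ) : (cutSet μ U).Nonempty :=
  ⟨_, ∅, ∅, MeasurableSet.empty, MeasurableSet.empty, rfl⟩

lemma integrable_restrict_left (hU1 : Integrable (uncurry U) (μ.prod μ)) (S : Set Ω) :
    Integrable (uncurry U) ((μ.restrict S).prod μ) := by
  have h : (μ.restrict S).prod μ = (μ.prod μ).restrict (S ×ˢ univ) := by
    rw [← Measure.prod_restrict, Measure.restrict_univ]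
  rw [h]
  exact hU1.restrict

lemma integrable_restrict_right (hU1 : Integrable (uncurry U) (μ.prod μ)) (T : Set Ω) :
    Integrable (uncurry U) (μ.prod (μ.restrict T)) := by
  have h : μ.prod (μ.restrict T) = (μ.prod μ).restrict (univ ×ˢ T) := by
    rw [← Measure.prod_restrict, Measure.restrict_univ]
  rw [h]
  exact hU1.restrict

lemma cutSet_bddAbove (hU1 : Integrable (uncurry U) (μ.prod μ)) :
    BddAbove (cutSet μ U) := by
  refine ⟨∫ z, |uncurry U z| ∂(μ.prod μ), ?_⟩
  rintro r ⟨S, T, hS, hT, rfl⟩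
  have hUrT := integrable_restrict_right hU1 T
  have hg : Integrable (fun x => ∫ y in T, U x y ∂μ) μ := hUrT.integral_prod_left
  have habs : Integrable (fun x => ∫ y, |U x y| ∂μ) μ := hU1.abs.integral_prod_left
  calc |∫ x in S, ∫ y in T, U x y ∂μ ∂μ|
      ≤ ∫ x in S, |∫ y in T, U x y ∂μ| ∂μ := by
        simpa [Real.norm_eq_abs] using
          norm_integral_le_integral_norm (μ := μ.restrict S) (f := fun x => ∫ y in T, U x y ∂μ)
    _ ≤ ∫ x, |∫ y in T, U x y ∂μ| ∂μ :=
        setIntegral_le_integral hg.abs (Filter.Eventually.of_forall fun x => abs_nonneg _)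
    _ ≤ ∫ x, (∫ y, |U x y| ∂μ) ∂μ := by
        refine integral_mono_ae hg.abs habs ?_
        filter_upwards [hU1.prod_right_ae] with x hx
        calc |∫ y in T, U x y ∂μ| ≤ ∫ y in T, |U x y| ∂μ := by
              simpa [Real.norm_eq_abs] using
                norm_integral_le_integral_norm (μ := μ.restrict T) (f := fun y => U x y)
          _ ≤ ∫ y, |U x y| ∂μ :=
              setIntegral_le_integral hx.abs (Filter.Eventually.of_forall fun y => abs_nonneg _)
    _ = ∫ z, |uncurry U z| ∂(μ.prod μ) := integral_integral hU1.abs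

/-- Extremizing a bilinear-type integral in one variable by an indicator. -/
lemma exists_indicator_ge {h : Ω → ℝ} (hhm : Measurable h) (hint : Integrable h μ)
    {f : Ω → ℝ} (hfm : Measurable f) (hf0 : ∀ x, 0 ≤ f x) (hf1 : ∀ x, f x ≤ 1) :
    ∃ S : Set Ω, MeasurableSet S ∧ |∫ x, f x * h x ∂μ| ≤ |∫ x in S, h x ∂μ| := by
  have hfh : Integrable (fun x => f x * h x) μ := by
    refine hint.mono ((hfm.mul hhm).aestronglyMeasurable) (Filter.Eventually.of_forall fun x => ?_)
    simp only [Real.norm_eq_abs, abs_mul]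
    have : |f x| ≤ 1 := by rw [abs_of_nonneg (hf0 x)]; exact hf1 x
    calc |f x| * |h x| ≤ 1 * |h x| := by gcongr
      _ = |h x| := one_mul _
  set Sp : Set Ω := {x | 0 < h x} with hSp_def
  set Sn : Set Ω := {x | h x < 0} with hSn_def
  have hSp : MeasurableSet Sp := measurableSet_lt measurable_const hhm
  have hSn : MeasurableSet Sn := measurableSet_lt hhm measurable_const
  have hub : ∫ x, f x * h x ∂μ ≤ ∫ x in Sp, h x ∂μ := by
    have h1 : ∫ x in Sp, f x * h x ∂μ ≤ ∫ x in Sp, h x ∂μ := by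
      refine setIntegral_mono_ae_restrict hfh.restrict hint.restrict ?_
      filter_upwards [ae_restrict_mem hSp] with x hx
      have : 0 < h x := hx
      nlinarith [hf1 x, hf0 x]
    have h2 : ∫ x in Spᶜ, f x * h x ∂μ ≤ 0 := by
      refine integral_nonpos_of_ae ?_
      filter_upwards [ae_restrict_mem hSp.compl] with x hx
      have hxh : h x ≤ 0 := by
        simp only [hSp_def, mem_compl_iff, mem_setOf_eq, not_lt] at hx
        exact hx
      exact mul_nonpos_of_nonneg_of_nonpos (hf0 x) hxh
    calc ∫ x, f x * h x ∂μ
        = ∫ x in Sp, f x * h x ∂μ + ∫ x in Spᶜ, f x * h x ∂μ :=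
          (integral_add_compl hSp hfh).symm
      _ ≤ ∫ x in Sp, h x ∂μ + 0 := add_le_add h1 h2
      _ = ∫ x in Sp, h x ∂μ := add_zero _
  have hlb : ∫ x in Sn, h x ∂μ ≤ ∫ x, f x * h x ∂μ := by
    have h1 : ∫ x in Sn, h x ∂μ ≤ ∫ x in Sn, f x * h x ∂μ := by
      refine setIntegral_mono_ae_restrict hint.restrict hfh.restrict ?_
      filter_upwards [ae_restrict_mem hSn] with x hx
      have : h x < 0 := hx
      nlinarith [hf1 x, hf0 x]
    have h2 : 0 ≤ ∫ x in Snᶜ, f x * h x ∂μ := by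
      refine integral_nonneg_of_ae ?_
      filter_upwards [ae_restrict_mem hSn.compl] with x hx
      have hxh : 0 ≤ h x := by
        simp only [hSn_def, mem_compl_iff, mem_setOf_eq, not_lt] at hx
        exact hx
      exact mul_nonneg (hf0 x) hxh
    calc ∫ x in Sn, h x ∂μ
        ≤ ∫ x in Sn, f x * h x ∂μ + ∫ x in Snᶜ, f x * h x ∂μ := le_add_of_le_of_nonneg h1 h2
      _ = ∫ x, f x * h x ∂μ := integral_add_compl hSn hfh
  rcases le_or_gt 0 (∫ x, f x * h x ∂μ) with hI | hI
  · refine ⟨Sp, hSp, ?_⟩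
    rw [abs_of_nonneg hI]
    exact hub.trans (le_abs_self _)
  · refine ⟨Sn, hSn, ?_⟩
    rw [abs_of_neg hI]
    have : -∫ x, f x * h x ∂μ ≤ -∫ x in Sn, h x ∂μ := neg_le_neg hlb
    exact this.trans (neg_le_abs _)

/-- The key bound: a bilinear average against `[0,1]`-valued functions is at most the cut norm. -/
lemma bilin_le_cutNorm (hmeas : Measurable (uncurry U))
    (hU1 : Integrable (uncurry U) (μ.prod μ))
    {f g : Ω → ℝ} (hfm : Measurable f) (hgm : Measurable g)
    (hf0 : ∀ x, 0 ≤ f x) (hf1 : ∀ x, f x ≤ 1) (hg0 : ∀ x, 0 ≤ g x) (hg1 : ∀ x, g x ≤ 1) :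
    |∫ x, f x * ∫ y, g y * U x y ∂μ ∂μ| ≤ cutNorm μ U := by
  have hVm : Measurable (fun z : Ω × Ω => g z.2 * U z.1 z.2) :=
    (hgm.comp measurable_snd).mul hmeas
  have hV : Integrable (fun z : Ω × Ω => g z.2 * U z.1 z.2) (μ.prod μ) := by
    refine hU1.mono hVm.aestronglyMeasurable (Filter.Eventually.of_forall fun z => ?_)
    simp only [Real.norm_eq_abs, abs_mul]
    have : |g z.2| ≤ 1 := by rw [abs_of_nonneg (hg0 _)]; exact hg1 _
    calc |g z.2| * |U z.1 z.2| ≤ 1 * |U z.1 z.2| := by gcongr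
      _ = |uncurry U z| := one_mul _
  set h : Ω → ℝ := fun x => ∫ y, g y * U x y ∂μ with hh_def
  have hh_sm : StronglyMeasurable h := hVm.stronglyMeasurable.integral_prod_right'
  have hh_int : Integrable h μ := hV.integral_prod_left
  obtain ⟨S, hS, hSle⟩ := exists_indicator_ge hh_sm.measurable hh_int hfm hf0 hf1
  -- rewrite ∫_S h as ∫ g k with k y = ∫ x in S, U x y
  have hVrS : Integrable (uncurry fun x y => g y * U x y) ((μ.restrict S).prod μ) := by
    have h : (μ.restrict S).prod μ = (μ.prod μ).restrict (S ×ˢ univ) := by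
      rw [← Measure.prod_restrict, Measure.restrict_univ]
    rw [h]; exact hV.restrict
  set k : Ω → ℝ := fun y => ∫ x in S, U x y ∂μ with hk_def
  have hUS : Integrable (uncurry U) ((μ.restrict S).prod μ) := integrable_restrict_left hU1 S
  have hk_sm : StronglyMeasurable k :=
    (hmeas.comp measurable_swap).stronglyMeasurable.integral_prod_right'
      (ν := μ.restrict S)
  have hk_int : Integrable k μ := hUS.swap.integral_prod_left
  have hswap1 : ∫ x in S, h x ∂μ = ∫ y, g y * k y ∂μ := by
    calc ∫ x in S, h x ∂μ
        = ∫ y, ∫ x in S, g y * U x y ∂μ ∂μ := integral_integral_swap hVrS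
      _ = ∫ y, g y * k y ∂μ := by
          refine integral_congr_ae (Filter.Eventually.of_forall fun y => ?_)
          exact integral_const_mul (g y) fun x => U x y
  obtain ⟨T, hT, hTle⟩ := exists_indicator_ge hk_sm.measurable hk_int hgm hg0 hg1
  have hUST : Integrable (uncurry U) ((μ.restrict S).prod (μ.restrict T)) := by
    rw [Measure.prod_restrict]; exact hU1.restrict
  have hswap2 : ∫ y in T, k y ∂μ = ∫ x in S, ∫ y in T, U x y ∂μ ∂μ :=
    (integral_integral_swap hUST).symm
  have hmem : |∫ x in S, ∫ y in T, U x y ∂μ ∂μ| ∈ cutSet μ U := ⟨S, T, hS, hT, rfl⟩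
  calc |∫ x, f x * h x ∂μ| ≤ |∫ x in S, h x ∂μ| := hSle
    _ = |∫ y, g y * k y ∂μ| := by rw [hswap1]
    _ ≤ |∫ y in T, k y ∂μ| := hTle
    _ = |∫ x in S, ∫ y in T, U x y ∂μ ∂μ| := by rw [hswap2]
    _ ≤ cutNorm μ U := le_csSup (cutSet_bddAbove hU1) hmem

end Aux

section Transfer

open Function Measure Set

variable {Ω Ω' : Type*} [MeasurableSpace Ω] [MeasurableSpace Ω']
variable {μ : Measure Ω} {μ' : Measure Ω'} [SigmaFinite μ] [SigmaFinite μ']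
variable {φ : Ω' → Ω} {U : Ω → Ω → ℝ}

lemma transfer_eq (hφ : MeasurePreserving φ μ' μ) (hmeas : Measurable (uncurry U))
    {S T : Set Ω} (hS : MeasurableSet S) (hT : MeasurableSet T) :
    ∫ x' in φ ⁻¹' S, ∫ y' in φ ⁻¹' T, U (φ x') (φ y') ∂μ' ∂μ'
      = ∫ x in S, ∫ y in T, U x y ∂μ ∂μ := by
  have hsec : ∀ c : Ω, Measurable (U c) := fun c =>
    hmeas.comp (measurable_const.prodMk measurable_id)
  have hinner : ∀ x' : Ω', ∫ y' in φ ⁻¹' T, U (φ x') (φ y') ∂μ' = ∫ y in T, U (φ x') y ∂μ := by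
    intro x'
    rw [← (hφ.restrict_preimage hT).map_eq]
    exact (integral_map hφ.measurable.aemeasurable
      (hsec (φ x')).aestronglyMeasurable).symm
  have hG_sm : StronglyMeasurable (fun x => ∫ y in T, U x y ∂μ) :=
    hmeas.stronglyMeasurable.integral_prod_right' (ν := μ.restrict T)
  calc ∫ x' in φ ⁻¹' S, ∫ y' in φ ⁻¹' T, U (φ x') (φ y') ∂μ' ∂μ'
      = ∫ x' in φ ⁻¹' S, (fun x => ∫ y in T, U x y ∂μ) (φ x') ∂μ' :=
        integral_congr_ae (Filter.Eventually.of_forall fun x' => hinner x')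
    _ = ∫ x in S, ∫ y in T, U x y ∂μ ∂μ := by
        rw [← (hφ.restrict_preimage hS).map_eq]
        exact (integral_map hφ.measurable.aemeasurable hG_sm.aestronglyMeasurable).symm

end Transfer

/-- Pulling back an integrable kernel `U : Ω × Ω → ℝ` along a
measure-preserving map `φ : Ω' → Ω` between σ-finite measure spaces leaves the cut norm
unchanged: `‖U‖_□ = ‖U^φ‖_□`, where `U^φ(x', y') = U(φ x', φ y')`. -/
theorem stmt5 {Ω Ω' : Type*} [MeasurableSpace Ω] [MeasurableSpace Ω']
    (μ : Measure Ω) (μ' : Measure Ω') [SigmaFinite μ] [SigmaFinite μ']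
    (φ : Ω' → Ω) (hφ : MeasurePreserving φ μ' μ)
    (U : Ω → Ω → ℝ) (hmeas : Measurable (Function.uncurry U))
    (hU1 : Integrable (Function.uncurry U) (μ.prod μ)) :
    cutNorm μ U = cutNorm μ' (fun x' y' => U (φ x') (φ y')) := by
  classical
  open Function Measure Set in
  have hmeas' : Measurable (uncurry fun x' y' => U (φ x') (φ y')) :=
    hmeas.comp ((hφ.measurable.comp measurable_fst).prodMk (hφ.measurable.comp measurable_snd))
  have hU1' : Integrable (uncurry fun x' y' => U (φ x') (φ y')) (μ'.prod μ') := by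
    have := ((hφ.prod hφ).integrable_comp hU1.aestronglyMeasurable).mpr hU1
    exact this
  apply le_antisymm
  · -- cutNorm μ U ≤ cutNorm μ' U^φ : the value set embeds via preimages
    refine csSup_le_csSup (cutSet_bddAbove hU1') (cutSet_nonempty μ U) ?_
    rintro r ⟨S, T, hS, hT, rfl⟩
    exact ⟨φ ⁻¹' S, φ ⁻¹' T, hφ.measurable hS, hφ.measurable hT,
      by rw [transfer_eq hφ hmeas hS hT]⟩
  · -- cutNorm μ' U^φ ≤ cutNorm μ U via Radon–Nikodym densities
    refine csSup_le (cutSet_nonempty μ' _) ?_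
    rintro r ⟨S', T', hS', hT', rfl⟩
    -- pushforward measures
    set νS : Measure Ω := (μ'.restrict S').map φ with hνS_def
    set νT : Measure Ω := (μ'.restrict T').map φ with hνT_def
    have hle : ∀ (A : Set Ω'), MeasurableSet A → ∀ (ν : Measure Ω), True := fun _ _ _ => trivial
    have hνS_le : νS ≤ μ := by
      refine Measure.le_iff.mpr fun A hA => ?_
      rw [hνS_def, Measure.map_apply hφ.measurable hA,
        Measure.restrict_apply (hφ.measurable hA)]
      calc μ' (φ ⁻¹' A ∩ S') ≤ μ' (φ ⁻¹' A) := measure_mono Set.inter_subset_left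
        _ = μ A := hφ.measure_preimage hA.nullMeasurableSet
    have hνT_le : νT ≤ μ := by
      refine Measure.le_iff.mpr fun A hA => ?_
      rw [hνT_def, Measure.map_apply hφ.measurable hA,
        Measure.restrict_apply (hφ.measurable hA)]
      calc μ' (φ ⁻¹' A ∩ T') ≤ μ' (φ ⁻¹' A) := measure_mono Set.inter_subset_left
        _ = μ A := hφ.measure_preimage hA.nullMeasurableSet
    haveI : SigmaFinite νS := sigmaFinite_of_le μ hνS_le
    haveI : SigmaFinite νT := sigmaFinite_of_le μ hνT_le
    set f : Ω → ℝ := fun x => min ((νS.rnDeriv μ x).toReal) 1 with hf_def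
    set g : Ω → ℝ := fun y => min ((νT.rnDeriv μ y).toReal) 1 with hg_def
    have hfm : Measurable f := (Measure.measurable_rnDeriv νS μ).ennreal_toReal.min
      measurable_const
    have hgm : Measurable g := (Measure.measurable_rnDeriv νT μ).ennreal_toReal.min
      measurable_const
    have hf0 : ∀ x, 0 ≤ f x := fun x => le_min ENNReal.toReal_nonneg zero_le_one
    have hf1 : ∀ x, f x ≤ 1 := fun x => min_le_right _ _
    have hg0 : ∀ x, 0 ≤ g x := fun x => le_min ENNReal.toReal_nonneg zero_le_one
    have hg1 : ∀ x, g x ≤ 1 := fun x => min_le_right _ _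
    have hf_ae : f =ᵐ[μ] fun x => (νS.rnDeriv μ x).toReal := by
      filter_upwards [Measure.rnDeriv_le_one_of_le hνS_le] with x hx
      have : (νS.rnDeriv μ x).toReal ≤ 1 := by
        simpa using ENNReal.toReal_mono one_ne_top hx
      simp [hf_def, min_eq_left this]
    have hg_ae : g =ᵐ[μ] fun y => (νT.rnDeriv μ y).toReal := by
      filter_upwards [Measure.rnDeriv_le_one_of_le hνT_le] with y hy
      have : (νT.rnDeriv μ y).toReal ≤ 1 := by
        simpa using ENNReal.toReal_mono one_ne_top hy
      simp [hg_def, min_eq_left this]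
    -- rewrite the double integral
    have hsec : ∀ c : Ω, Measurable (U c) := fun c =>
      hmeas.comp (measurable_const.prodMk measurable_id)
    have hinner : ∀ x : Ω,
        ∫ y' in T', U x (φ y') ∂μ' = ∫ y, g y * U x y ∂μ := by
      intro x
      have h1 : ∫ y' in T', U x (φ y') ∂μ' = ∫ y, U x y ∂νT :=
        (integral_map hφ.measurable.aemeasurable (hsec x).aestronglyMeasurable).symm
      have h2 : ∫ y, U x y ∂νT = ∫ y, (νT.rnDeriv μ y).toReal * U x y ∂μ := by
        rw [← integral_rnDeriv_smul hνT_le.absolutelyContinuous]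
        simp [smul_eq_mul]
      have h3 : ∫ y, (νT.rnDeriv μ y).toReal * U x y ∂μ = ∫ y, g y * U x y ∂μ :=
        integral_congr_ae (hg_ae.symm.mono fun y hy => by simp only []; rw [show (νT.rnDeriv μ y).toReal = g y from hy])
      rw [h1, h2, ← h3]
    set h : Ω → ℝ := fun x => ∫ y, g y * U x y ∂μ with hh_def
    have hh_sm : StronglyMeasurable h :=
      (((hgm.comp measurable_snd).mul hmeas)).stronglyMeasurable.integral_prod_right'
    have houter :
        ∫ x' in S', ∫ y' in T', U (φ x') (φ y') ∂μ' ∂μ' = ∫ x, f x * h x ∂μ := by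
      calc ∫ x' in S', ∫ y' in T', U (φ x') (φ y') ∂μ' ∂μ'
          = ∫ x' in S', h (φ x') ∂μ' :=
            integral_congr_ae (Filter.Eventually.of_forall fun x' => hinner (φ x'))
        _ = ∫ x, h x ∂νS :=
            (integral_map hφ.measurable.aemeasurable hh_sm.aestronglyMeasurable).symm
        _ = ∫ x, (νS.rnDeriv μ x).toReal * h x ∂μ := by
            rw [← integral_rnDeriv_smul hνS_le.absolutelyContinuous]
            simp [smul_eq_mul]
        _ = ∫ x, f x * h x ∂μ :=
            (integral_congr_ae (hf_ae.mono fun x hx => by rw [hx])).symm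
    rw [houter]
    exact bilin_le_cutNorm hmeas hU1 hfm hgm hf0 hf1 hg0 hg1
end

section
/- Let G be a graph on n vertices with no isolated vertices, color each vertex independently red or blue with probability 1/2, and let X be the number of red vertices having at least one blue neighbor. Then for any t > 0 and t' = 2t + log 4, E[e^{t'X}] ≥ e^{tn}. -/
open Finset

/-- In a graph with no isolated vertices there is a "blue" set `B` covering at most half
the vertices such that every vertex outside `B` has a neighbor in `B`. -/
lemma exists_small_dominating {V : Type*} [Fintype V] [DecidableEq V]
    (G : SimpleGraph V) [DecidableRel G.Adj]
    (hG : ∀ v : V, 0 < G.degree v) :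
    ∃ B : Finset V, 2 * B.card ≤ Fintype.card V ∧
      ∀ v ∉ B, ∃ w, G.Adj v w ∧ w ∈ B := by
  classical
  -- take a maximal independent set I
  set s : Finset (Finset V) :=
    Finset.univ.filter (fun I : Finset V => ∀ a ∈ I, ∀ b ∈ I, ¬ G.Adj a b) with hs
  have hne : s.Nonempty := ⟨∅, by simp [hs]⟩
  obtain ⟨I, hIs, hImax⟩ := s.exists_maximal hne
  have hIind : ∀ a ∈ I, ∀ b ∈ I, ¬ G.Adj a b := by
    have := (Finset.mem_filter.1 hIs).2
    exact this
  -- I is dominating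
  have hdom : ∀ v ∉ I, ∃ w, G.Adj v w ∧ w ∈ I := by
    intro v hv
    by_contra hcon
    push_neg at hcon
    have hins : insert v I ∈ s := by
      refine Finset.mem_filter.2 ⟨Finset.mem_univ _, ?_⟩
      intro a ha b hb hadj
      rcases Finset.mem_insert.1 ha with ha' | ha' <;>
        rcases Finset.mem_insert.1 hb with hb' | hb'
      · rw [ha', hb'] at hadj; exact G.irrefl hadj
      · rw [ha'] at hadj; exact hcon b hadj hb'
      · rw [hb'] at hadj; exact hcon a hadj.symm ha'
      · exact hIind a ha' b hb' hadj
    exact hv (hImax hins (Finset.subset_insert v I) (Finset.mem_insert_self v I))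
  -- complement of I is also dominating
  have hdom' : ∀ v ∈ I, ∃ w, G.Adj v w ∧ w ∉ I := by
    intro v hv
    obtain ⟨w, hw⟩ : (G.neighborFinset v).Nonempty := Finset.card_pos.1 (hG v)
    have hadj : G.Adj v w := (SimpleGraph.mem_neighborFinset _ _ _).1 hw
    exact ⟨w, hadj, fun hwI => hIind v hv w hwI hadj⟩
  rcases le_or_gt (2 * I.card) (Fintype.card V) with h | h
  · exact ⟨I, h, hdom⟩
  · refine ⟨Finset.univ \ I, ?_, ?_⟩
    · rw [Finset.card_sdiff_of_subset (Finset.subset_univ _), Finset.card_univ]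
      omega
    · intro v hv
      have hvI : v ∈ I := by
        by_contra hvI
        exact hv (Finset.mem_sdiff.2 ⟨Finset.mem_univ _, hvI⟩)
      obtain ⟨w, hadj, hwI⟩ := hdom' v hvI
      exact ⟨w, hadj, Finset.mem_sdiff.2 ⟨Finset.mem_univ _, hwI⟩⟩

/-- Let `G` be a graph on `n` vertices with no isolated vertices.  Color
each vertex independently red or blue with probability `1/2`, and let `X` be the number of
red vertices having at least one blue neighbor.  Then for any `t > 0` and
`t' = 2t + log 4`, `E[e^{t' X}] ≥ e^{t n}`.  (The expectation is written as the average
over all `2^n` colorings `c : V → Bool`, with `red = true`.) -/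
theorem stmt12 {V : Type*} [Fintype V] [DecidableEq V]
    (G : SimpleGraph V) [DecidableRel G.Adj]
    (hG : ∀ v : V, 0 < G.degree v) (t : ℝ) (ht : 0 < t) :
    Real.exp (t * Fintype.card V) ≤
      (∑ c : V → Bool,
          Real.exp ((2 * t + Real.log 4) *
            (Finset.univ.filter
              (fun v : V => c v = true ∧ ∃ w ∈ G.neighborFinset v, c w = false)).card))
        / 2 ^ Fintype.card V := by
  classical
  obtain ⟨B, hBcard, hBdom⟩ := exists_small_dominating G hG
  set n := Fintype.card V with hn
  -- the special coloring: red iff not in B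
  set c₀ : V → Bool := fun v => decide (v ∉ B) with hc₀
  have hfilter :
      (Finset.univ.filter
        (fun v : V => c₀ v = true ∧ ∃ w ∈ G.neighborFinset v, c₀ w = false))
        = Finset.univ \ B := by
    ext v
    simp only [Finset.mem_filter, Finset.mem_univ, true_and, Finset.mem_sdiff,
      hc₀, decide_eq_true_eq, decide_eq_false_iff_not, not_not,
      SimpleGraph.mem_neighborFinset]
    constructor
    · rintro ⟨hv, -⟩; exact hv
    · intro hv
      obtain ⟨w, hadj, hwB⟩ := hBdom v hv
      exact ⟨hv, w, hadj, hwB⟩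
  have hcard : ((Finset.univ.filter
      (fun v : V => c₀ v = true ∧ ∃ w ∈ G.neighborFinset v, c₀ w = false)).card : ℝ)
      = n - B.card := by
    rw [hfilter, Finset.card_sdiff_of_subset (Finset.subset_univ _), Finset.card_univ, ← hn]
    have : B.card ≤ n := by omega
    push_cast [Nat.cast_sub this]
    ring
  -- the single term lower-bounds the sum
  have hsum : Real.exp ((2 * t + Real.log 4) * ((n : ℝ) - B.card)) ≤
      ∑ c : V → Bool,
        Real.exp ((2 * t + Real.log 4) *
          (Finset.univ.filter
            (fun v : V => c v = true ∧ ∃ w ∈ G.neighborFinset v, c w = false)).card) := by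
    rw [← hcard]
    exact Finset.single_le_sum (f := fun c : V → Bool =>
        Real.exp ((2 * t + Real.log 4) *
          (Finset.univ.filter
            (fun v : V => c v = true ∧ ∃ w ∈ G.neighborFinset v, c w = false)).card))
      (fun _ _ => (Real.exp_pos _).le) (Finset.mem_univ c₀)
  have hpow : (0 : ℝ) < 2 ^ n := by positivity
  rw [le_div_iff₀ hpow]
  refine le_trans ?_ hsum
  -- exp(t n) * 2^n ≤ exp((2t + log 4)(n - |B|))
  have hlog4 : Real.log 4 = 2 * Real.log 2 := by
    rw [show (4:ℝ) = 2^2 by norm_num, Real.log_pow]; push_cast; ring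
  have h2n : ((2:ℝ)) ^ n = Real.exp (n * Real.log 2) := by
    rw [Real.exp_nat_mul, Real.exp_log (by norm_num)]
  rw [h2n, ← Real.exp_add, Real.exp_le_exp, hlog4]
  have hhalf : (n : ℝ) / 2 ≤ (n : ℝ) - B.card := by
    have : (2 : ℝ) * B.card ≤ n := by exact_mod_cast hBcard
    linarith
  have hT : 0 < 2 * t + 2 * Real.log 2 := by
    have : (0:ℝ) < Real.log 2 := Real.log_pos (by norm_num)
    linarith
  calc t * n + n * Real.log 2 = (2 * t + 2 * Real.log 2) * ((n:ℝ)/2) := by ring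
    _ ≤ (2 * t + 2 * Real.log 2) * ((n:ℝ) - B.card) := by
        exact mul_le_mul_of_nonneg_left hhalf hT.le
end

section
/- Suppose G and G' are random finite graphs such that for every finite graph F, E[inj(F,G)] = E[inj(F,G')], where inj(F,·) is the number of injective homomorphisms of F. Let X be the number of vertices of G, and suppose E[(2+ε)^X] < ∞ for some ε > 0. Then G and G' have the same distribution up to isomorphism. -/
open MeasureTheory ENNReal

/-- The type of finite simple graphs (with vertex set some `Fin n`), made into a measurable
space with the discrete (⊤) σ-algebra. -/
abbrev FinGraph : Type := Σ n : ℕ, SimpleGraph (Fin n)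

instance : MeasurableSpace FinGraph := ⊤

/-- `injCount F G` is the number of injective graph homomorphisms from `F` into `G`. -/
noncomputable def injCount {m n : ℕ} (F : SimpleGraph (Fin m)) (G : SimpleGraph (Fin n)) :
    ℕ :=
  Nat.card {f : Fin m → Fin n //
    Function.Injective f ∧ ∀ a b, F.Adj a b → G.Adj (f a) (f b)}

namespace Stmt14
open Finset SimpleGraph

section
attribute [local instance] Classical.propDecidable

variable {m n : ℕ}

/-- The padding of a graph `J` on `Fin m` by `k` isolated vertices. -/
def pad (J : SimpleGraph (Fin m)) (k : ℕ) : SimpleGraph (Fin (m + k)) :=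
  J.map (Fin.castAddEmb k)

lemma injCount_eq_zero (F : SimpleGraph (Fin m)) (H : SimpleGraph (Fin n)) (h : n < m) :
    injCount F H = 0 := by
  rw [injCount, Nat.card_eq_zero]
  left
  constructor
  rintro ⟨f, hf, -⟩
  have := Fintype.card_le_of_injective f hf
  simp only [Fintype.card_fin] at this
  omega

/-- assembling a function on `Fin (m+k)` from its two parts -/
def padFun {J : SimpleGraph (Fin m)} {k : ℕ} {H : SimpleGraph (Fin n)}
    (fe : Σ f : {f : Fin m → Fin n //
          Function.Injective f ∧ ∀ a b, J.Adj a b → H.Adj (f a) (f b)},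
        (Fin k ↪ ((Set.range f.1)ᶜ : Set (Fin n)))) :
    {g : Fin (m + k) → Fin n //
        Function.Injective g ∧ ∀ a b, (pad J k).Adj a b → H.Adj (g a) (g b)} := by
  refine ⟨Fin.addCases fe.1.1 (fun i => (fe.2 i).1), ?_, ?_⟩
  · intro x y hxy
    simp only at hxy
    induction x using Fin.addCases with
    | left a => induction y using Fin.addCases with
      | left b =>
          simp only [Fin.addCases_left] at hxy
          rw [fe.1.2.1 hxy]
      | right j =>
          simp only [Fin.addCases_left, Fin.addCases_right] at hxy
          exact absurd (⟨a, hxy⟩ : (fe.2 j).1 ∈ Set.range fe.1.1) (fe.2 j).2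
    | right i => induction y using Fin.addCases with
      | left b =>
          simp only [Fin.addCases_left, Fin.addCases_right] at hxy
          exact absurd (⟨b, hxy.symm⟩ : _ ∈ Set.range fe.1.1) (fe.2 i).2
      | right j =>
          simp only [Fin.addCases_right] at hxy
          rw [fe.2.injective (Subtype.ext hxy)]
  · intro a b hab
    rw [pad, SimpleGraph.map_adj] at hab
    obtain ⟨a', b', h, ha, hb⟩ := hab
    subst ha; subst hb
    have key : ∀ c : Fin m, Fin.addCases (motive := fun _ => Fin n) fe.1.1
        (fun i => (fe.2 i).1) ((Fin.castAddEmb k) c) = fe.1.1 c := fun c =>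
      Fin.addCases_left c
    simp only [key]
    exact fe.1.2.2 _ _ h

lemma padFun_bijective {J : SimpleGraph (Fin m)} {k : ℕ} {H : SimpleGraph (Fin n)} :
    Function.Bijective (padFun (J := J) (k := k) (H := H)) := by
  constructor
  · rintro ⟨⟨f, hf⟩, e⟩ ⟨⟨f', hf'⟩, e'⟩ h
    have hval := congrArg Subtype.val h
    simp only [padFun] at hval
    have hf1 : f = f' := by
      funext a
      have := congrFun hval (Fin.castAdd k a)
      simpa [Fin.addCases_left] using this
    subst hf1
    congr 1
    refine Function.Embedding.ext fun i => Subtype.ext ?_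
    have := congrFun hval (Fin.natAdd m i)
    simp only [Fin.addCases_right] at this
    exact this
  · rintro ⟨g, hg1, hg2⟩
    refine ⟨⟨⟨fun a => g (Fin.castAdd k a), ?_, ?_⟩,
      ⟨fun i => ⟨g (Fin.natAdd m i), ?_⟩, ?_⟩⟩, ?_⟩
    · exact hg1.comp (Fin.castAdd_injective m k)
    · intro a b hab
      exact hg2 _ _ (by rw [pad, SimpleGraph.map_adj]; exact ⟨a, b, hab, rfl, rfl⟩)
    · rintro ⟨a, ha⟩
      have := hg1 ha
      have h1 : (Fin.castAdd k a).1 = (Fin.natAdd m i).1 := by rw [this]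
      simp only [Fin.castAdd, Fin.natAdd, Fin.castLE] at h1
      omega
    · intro i j hij
      have h2 := hg1 (congrArg Subtype.val hij)
      have h3 : (Fin.natAdd m i).1 = (Fin.natAdd m j).1 := by rw [h2]
      simp only [Fin.natAdd] at h3
      exact Fin.ext (by omega)
    · apply Subtype.ext
      funext x
      simp only [padFun]
      induction x using Fin.addCases with
      | left a => simp [Fin.addCases_left]
      | right i => simp [Fin.addCases_right]; rfl

lemma injCount_pad (J : SimpleGraph (Fin m)) (k : ℕ) (H : SimpleGraph (Fin n)) :
    injCount (pad J k) H = injCount J H * (n - m).descFactorial k := by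
  rw [injCount, injCount, ← Nat.card_eq_of_bijective _ (padFun_bijective (J := J) (k := k) (H := H))]
  haveI : ∀ (f : {f : Fin m → Fin n //
      Function.Injective f ∧ ∀ a b, J.Adj a b → H.Adj (f a) (f b)}),
      Fintype ((Set.range f.1)ᶜ : Set (Fin n)) := fun f => Fintype.ofFinite _
  rw [Nat.card_eq_fintype_card, Nat.card_eq_fintype_card, Fintype.card_sigma]
  have hfib : ∀ (f : {f : Fin m → Fin n //
      Function.Injective f ∧ ∀ a b, J.Adj a b → H.Adj (f a) (f b)}),
      Fintype.card (Fin k ↪ ((Set.range f.1)ᶜ : Set (Fin n))) = (n - m).descFactorial k := by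
    intro f
    rw [Fintype.card_embedding_eq, Fintype.card_fin]
    congr 1
    rw [Fintype.card_compl_set, Set.card_range_of_injective f.2.1, Fintype.card_fin,
      Fintype.card_fin]
  simp only [hfib]
  rw [Finset.sum_const, Finset.card_univ, smul_eq_mul]

variable (F : SimpleGraph (Fin m)) (H : SimpleGraph (Fin n))

/-- The number of "induced embeddings" of `F` into `H`. -/
noncomputable def indCount : ℕ :=
  Nat.card {f : Fin m → Fin n // Function.Injective f ∧
    ∀ a b, F.Adj a b ↔ H.Adj (f a) (f b)}

lemma injCount_eq_sum (F' : SimpleGraph (Fin m)) :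
    (injCount F' H : ℤ) = ∑ f : Fin m → Fin n,
      (if Function.Injective f ∧ (∀ a b, F'.Adj a b → H.Adj (f a) (f b)) then (1 : ℤ) else 0) := by
  rw [Finset.sum_boole, injCount, Nat.card_eq_fintype_card, Fintype.card_subtype]

lemma sum_IE :
    ∑ s ∈ (Fᶜ.edgeFinset).powerset, (-1 : ℤ) ^ s.card *
        (injCount (F ⊔ SimpleGraph.fromEdgeSet ↑s) H : ℤ)
      = (indCount F H : ℤ) := by
  set NE := Fᶜ.edgeFinset with hNE
  set pres : (Fin m → Fin n) → Finset (Sym2 (Fin m)) :=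
    fun f => NE.filter (fun e => Sym2.map f e ∈ H.edgeSet) with hpres
  have hpresNE : ∀ f, pres f ⊆ NE := fun f => Finset.filter_subset _ _
  have claim1 : ∀ (s : Finset (Sym2 (Fin m))), s ∈ NE.powerset → ∀ f : Fin m → Fin n,
      ((Function.Injective f ∧ ∀ a b, (F ⊔ SimpleGraph.fromEdgeSet ↑s).Adj a b →
          H.Adj (f a) (f b)) ↔
        ((Function.Injective f ∧ ∀ a b, F.Adj a b → H.Adj (f a) (f b)) ∧ s ⊆ pres f)) := by
    intro s hs f
    rw [Finset.mem_powerset] at hs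
    constructor
    · rintro ⟨hinj, hhom⟩
      refine ⟨⟨hinj, fun a b hab => hhom a b (by simp [hab])⟩, ?_⟩
      intro e he
      have heNE : e ∈ NE := hs he
      rw [hpres, Finset.mem_filter]
      refine ⟨heNE, ?_⟩
      induction e with
      | _ a b =>
        have hne : a ≠ b := by
          have := SimpleGraph.mem_edgeFinset.mp heNE
          rw [SimpleGraph.mem_edgeSet, SimpleGraph.compl_adj] at this
          exact this.1
        have : (F ⊔ SimpleGraph.fromEdgeSet ↑s).Adj a b := by
          rw [SimpleGraph.sup_adj, SimpleGraph.fromEdgeSet_adj]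
          exact Or.inr ⟨by exact_mod_cast he, hne⟩
        have := hhom a b this
        rw [Sym2.map_pair_eq, SimpleGraph.mem_edgeSet]
        exact this
    · rintro ⟨⟨hinj, hhom⟩, hsub⟩
      refine ⟨hinj, fun a b hab => ?_⟩
      rw [SimpleGraph.sup_adj] at hab
      rcases hab with hab | hab
      · exact hhom a b hab
      · rw [SimpleGraph.fromEdgeSet_adj] at hab
        have := hsub (by exact_mod_cast hab.1)
        rw [hpres, Finset.mem_filter, Sym2.map_pair_eq, SimpleGraph.mem_edgeSet] at this
        exact this.2
  calc ∑ s ∈ NE.powerset, (-1 : ℤ) ^ s.card *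
        (injCount (F ⊔ SimpleGraph.fromEdgeSet ↑s) H : ℤ)
      = ∑ s ∈ NE.powerset, ∑ f : Fin m → Fin n, (-1 : ℤ) ^ s.card *
          (if Function.Injective f ∧ (∀ a b, (F ⊔ SimpleGraph.fromEdgeSet ↑s).Adj a b →
            H.Adj (f a) (f b)) then (1 : ℤ) else 0) := by
        refine Finset.sum_congr rfl fun s _ => ?_
        rw [injCount_eq_sum, Finset.mul_sum]
        refine Finset.sum_congr rfl fun f _ => ?_
        by_cases h : Function.Injective f ∧ ∀ a b,
            (F ⊔ SimpleGraph.fromEdgeSet ↑s).Adj a b → H.Adj (f a) (f b)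
        · simp [h]
        · simp [h]
    _ = ∑ f : Fin m → Fin n, ∑ s ∈ NE.powerset, (-1 : ℤ) ^ s.card *
          (if (Function.Injective f ∧ ∀ a b, F.Adj a b → H.Adj (f a) (f b)) ∧ s ⊆ pres f
            then (1 : ℤ) else 0) := by
        rw [Finset.sum_comm]
        refine Finset.sum_congr rfl fun f _ => Finset.sum_congr rfl fun s hs => ?_
        rw [if_congr (claim1 s hs f) rfl rfl]
    _ = ∑ f : Fin m → Fin n,
          (if (Function.Injective f ∧ ∀ a b, F.Adj a b → H.Adj (f a) (f b)) ∧ pres f = ∅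
            then (1 : ℤ) else 0) := by
        refine Finset.sum_congr rfl fun f _ => ?_
        by_cases hP : Function.Injective f ∧ ∀ a b, F.Adj a b → H.Adj (f a) (f b)
        · simp only [mul_ite, mul_one, mul_zero, and_iff_right hP]
          have hsub : (pres f).powerset ⊆ NE.powerset := Finset.powerset_mono.mpr (hpresNE f)
          have hz : ∀ s ∈ NE.powerset, s ∉ (pres f).powerset →
              (if s ⊆ pres f then ((-1 : ℤ)) ^ s.card else 0) = 0 := by
            intro s _ hs
            rw [Finset.mem_powerset] at hs
            simp [hs]
          rw [← Finset.sum_subset hsub hz]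
          calc ∑ s ∈ (pres f).powerset, (if s ⊆ pres f then ((-1 : ℤ)) ^ s.card else 0)
              = ∑ s ∈ (pres f).powerset, ((-1 : ℤ)) ^ s.card :=
                Finset.sum_congr rfl fun s hs => if_pos (Finset.mem_powerset.mp hs)
            _ = if pres f = ∅ then 1 else 0 := Finset.sum_powerset_neg_one_pow_card
        · simp [hP]
    _ = (indCount F H : ℤ) := by
        rw [Finset.sum_boole, indCount, Nat.card_eq_fintype_card, Fintype.card_subtype]
        norm_cast
        congr 1
        apply Finset.filter_congr
        intro f _
        constructor
        · rintro ⟨⟨hinj, hhom⟩, hemp⟩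
          refine ⟨hinj, fun a b => ⟨hhom a b, fun hH => ?_⟩⟩
          by_contra hF
          have hab : a ≠ b := by rintro rfl; exact H.loopless.irrefl _ hH
          have heNE : s(a, b) ∈ NE := by
            rw [hNE, SimpleGraph.mem_edgeFinset, SimpleGraph.mem_edgeSet,
              SimpleGraph.compl_adj]
            exact ⟨hab, hF⟩
          have hmem : s(a, b) ∈ pres f := by
            rw [hpres]
            exact Finset.mem_filter.mpr ⟨heNE, by
              rw [Sym2.map_pair_eq, SimpleGraph.mem_edgeSet]; exact hH⟩
          rw [hemp] at hmem
          exact absurd hmem (Finset.notMem_empty _)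
        · rintro ⟨hinj, hiff2⟩
          refine ⟨⟨hinj, fun a b hab => (hiff2 a b).1 hab⟩, ?_⟩
          rw [Finset.eq_empty_iff_forall_notMem]
          intro e he
          rw [hpres, Finset.mem_filter] at he
          obtain ⟨heNE, hmem⟩ := he
          induction e with
          | _ a b =>
            rw [Sym2.map_pair_eq, SimpleGraph.mem_edgeSet] at hmem
            have hF := (hiff2 a b).2 hmem
            rw [hNE, SimpleGraph.mem_edgeFinset, SimpleGraph.mem_edgeSet,
              SimpleGraph.compl_adj] at heNE
            exact heNE.2 hF

noncomputable def indEquiv (F H : SimpleGraph (Fin m)) :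
    {f : Fin m → Fin m // Function.Injective f ∧
      ∀ a b, F.Adj a b ↔ H.Adj (f a) (f b)} ≃ (F ≃g H) where
  toFun f :=
    { toEquiv := Equiv.ofBijective f.1 ((Finite.injective_iff_bijective).1 f.2.1)
      map_rel_iff' := fun {a b} => (f.2.2 a b).symm }
  invFun φ := ⟨⇑φ, φ.injective, fun a b => (φ.map_adj_iff).symm⟩
  left_inv f := Subtype.ext rfl
  right_inv φ := by
    ext x
    rfl
  
lemma indCount_eq_card_iso (F H : SimpleGraph (Fin m)) :
    indCount F H = Nat.card (F ≃g H) := Nat.card_congr (indEquiv F H)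

lemma card_iso_mul (F H : SimpleGraph (Fin m)) :
    Nat.card (F ≃g H) = Nat.card (F ≃g F) * (if Nonempty (H ≃g F) then 1 else 0) := by
  by_cases h : Nonempty (H ≃g F)
  · obtain ⟨e⟩ := h
    rw [if_pos ⟨e⟩, mul_one]
    refine Nat.card_congr ⟨fun φ => φ.trans e, fun ψ => ψ.trans e.symm, ?_, ?_⟩
    · intro φ; ext x; simp
    · intro ψ; ext x; simp
  · rw [if_neg h, mul_zero, Nat.card_eq_zero]
    left
    exact ⟨fun φ => h ⟨φ.symm⟩⟩

lemma indCount_mul (F : SimpleGraph (Fin m)) (H : SimpleGraph (Fin n)) :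
    (if n = m then indCount F H else 0)
      = Nat.card (F ≃g F) * (if Nonempty (H ≃g F) then 1 else 0) := by
  by_cases hnm : n = m
  · subst hnm
    rw [if_pos rfl, indCount_eq_card_iso, card_iso_mul]
  · rw [if_neg hnm, if_neg, mul_zero]
    rintro ⟨φ⟩
    exact hnm (by simpa using Fintype.card_congr φ.toEquiv)

lemma grand (F : SimpleGraph (Fin m)) (H : SimpleGraph (Fin n)) :
    ∑ p ∈ Finset.range (n + 1) ×ˢ (Fᶜ.edgeFinset).powerset,
        (if Even (p.1 + p.2.card) then (n - m).choose p.1 *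
          injCount (F ⊔ SimpleGraph.fromEdgeSet ↑p.2) H else 0)
      = Nat.card (F ≃g F) * (if Nonempty (H ≃g F) then 1 else 0)
        + ∑ p ∈ Finset.range (n + 1) ×ˢ (Fᶜ.edgeFinset).powerset,
            (if ¬ Even (p.1 + p.2.card) then (n - m).choose p.1 *
              injCount (F ⊔ SimpleGraph.fromEdgeSet ↑p.2) H else 0) := by
  set R := Finset.range (n + 1) ×ˢ (Fᶜ.edgeFinset).powerset with hR
  set T : ℕ × Finset (Sym2 (Fin m)) → ℤ := fun p =>
    ((n - m).choose p.1 * injCount (F ⊔ SimpleGraph.fromEdgeSet ↑p.2) H : ℤ) with hT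
  have hsplit : ∀ (c : ℕ) (t : ℤ),
      (if Even c then t else 0) - (if ¬ Even c then t else 0) = (-1) ^ c * t := by
    intro c t
    by_cases h : Even c
    · simp [h, Even.neg_one_pow h]
    · simp [h, Odd.neg_one_pow (Nat.not_even_iff_odd.mp h)]
  have key : (∑ p ∈ R, (if Even (p.1 + p.2.card) then T p else 0))
      - (∑ p ∈ R, (if ¬ Even (p.1 + p.2.card) then T p else 0))
      = ((Nat.card (F ≃g F) : ℤ) * (if Nonempty (H ≃g F) then (1 : ℤ) else 0)) := by
    rw [← Finset.sum_sub_distrib]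
    have step1 : ∑ p ∈ R, ((if Even (p.1 + p.2.card) then T p else 0)
        - (if ¬ Even (p.1 + p.2.card) then T p else 0))
        = ∑ p ∈ R, (-1 : ℤ) ^ (p.1 + p.2.card) * T p :=
      Finset.sum_congr rfl fun p _ => hsplit _ _
    rw [step1]
    by_cases hmn : m ≤ n
    · calc ∑ p ∈ R, (-1 : ℤ) ^ (p.1 + p.2.card) * T p
          = ∑ k ∈ Finset.range (n + 1), ((-1 : ℤ) ^ k * (n - m).choose k) *
              (∑ s ∈ (Fᶜ.edgeFinset).powerset,
                (-1 : ℤ) ^ s.card * (injCount (F ⊔ SimpleGraph.fromEdgeSet ↑s) H : ℤ)) := by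
            rw [hR, Finset.sum_product]
            refine Finset.sum_congr rfl fun k _ => ?_
            rw [Finset.mul_sum]
            refine Finset.sum_congr rfl fun s _ => ?_
            rw [hT]
            push_cast
            ring
        _ = (∑ k ∈ Finset.range (n + 1), (-1 : ℤ) ^ k * (n - m).choose k) *
              (∑ s ∈ (Fᶜ.edgeFinset).powerset,
                (-1 : ℤ) ^ s.card * (injCount (F ⊔ SimpleGraph.fromEdgeSet ↑s) H : ℤ)) :=
            (Finset.sum_mul _ _ _).symm
        _ = ((if n = m then 1 else 0) : ℤ) * (indCount F H : ℤ) := by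
            rw [sum_IE]
            congr 1
            have hsub : Finset.range (n - m + 1) ⊆ Finset.range (n + 1) :=
              Finset.range_subset_range.mpr (by omega)
            have hzero : ∀ k ∈ Finset.range (n + 1), k ∉ Finset.range (n - m + 1) →
                (-1 : ℤ) ^ k * (n - m).choose k = 0 := by
              intro k hk1 hk2
              simp only [Finset.mem_range] at hk1 hk2
              rw [Nat.choose_eq_zero_of_lt (by omega)]
              simp
            rw [← Finset.sum_subset hsub hzero, Int.alternating_sum_range_choose]
            exact if_congr (by omega) rfl rfl
        _ = ((if n = m then indCount F H else 0 : ℕ) : ℤ) := by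
            by_cases h : n = m <;> simp [h]
        _ = ((Nat.card (F ≃g F) * if Nonempty (H ≃g F) then 1 else 0 : ℕ) : ℤ) := by
            rw [indCount_mul]
        _ = ((Nat.card (F ≃g F) : ℤ) * (if Nonempty (H ≃g F) then (1 : ℤ) else 0)) := by
            by_cases h : Nonempty (H ≃g F) <;> simp [h]
    · have hz : ∀ p ∈ R, (-1 : ℤ) ^ (p.1 + p.2.card) * T p = 0 := by
        intro p _
        rw [hT]
        simp only
        rw [injCount_eq_zero _ _ (by omega)]
        simp
      rw [Finset.sum_congr rfl hz, Finset.sum_const, smul_zero]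
      rw [if_neg, mul_zero]
      rintro ⟨φ⟩
      exact hmn (le_of_eq (by simpa using (Fintype.card_congr φ.toEquiv).symm))
  zify
  have expand : ∀ c : Prop, ∀ t : ℕ, ((if c then t else 0 : ℕ) : ℤ) = if c then (t : ℤ) else 0 := by
    intro c t
    by_cases h : c <;> simp [h]
  push_cast
  push_cast at key
  linarith [key]

/-- The weight of index `p = (k, s)` evaluated on a finite graph `W`. -/
noncomputable def wt (F : SimpleGraph (Fin m)) (p : ℕ × Finset (Sym2 (Fin m)))
    (W : FinGraph) : ℝ≥0∞ :=
  (Nat.factorial p.1 : ℝ≥0∞)⁻¹ * injCount (pad (F ⊔ SimpleGraph.fromEdgeSet ↑p.2) p.1) W.2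

noncomputable def termA (F : SimpleGraph (Fin m)) (p : ℕ × Finset (Sym2 (Fin m)))
    (W : FinGraph) : ℝ≥0∞ :=
  if p.2 ⊆ (Fᶜ).edgeFinset ∧ Even (p.1 + p.2.card) then wt F p W else 0

noncomputable def termB (F : SimpleGraph (Fin m)) (p : ℕ × Finset (Sym2 (Fin m)))
    (W : FinGraph) : ℝ≥0∞ :=
  if p.2 ⊆ (Fᶜ).edgeFinset ∧ ¬ Even (p.1 + p.2.card) then wt F p W else 0

lemma wt_eq (F : SimpleGraph (Fin m)) (p : ℕ × Finset (Sym2 (Fin m)))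
    (H : SimpleGraph (Fin n)) :
    wt F p ⟨n, H⟩ = (((n - m).choose p.1 *
      injCount (F ⊔ SimpleGraph.fromEdgeSet ↑p.2) H : ℕ) : ℝ≥0∞) := by
  have h1 : (Nat.factorial p.1 : ℝ≥0∞) ≠ 0 := Nat.cast_ne_zero.mpr (Nat.factorial_ne_zero _)
  have h2 : (Nat.factorial p.1 : ℝ≥0∞) ≠ ⊤ := ENNReal.natCast_ne_top _
  rw [wt]
  show (Nat.factorial p.1 : ℝ≥0∞)⁻¹ *
      (injCount (pad (F ⊔ SimpleGraph.fromEdgeSet ↑p.2) p.1) H : ℝ≥0∞) = _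
  rw [injCount_pad, Nat.descFactorial_eq_factorial_mul_choose]
  push_cast
  have : (Nat.factorial p.1 : ℝ≥0∞)⁻¹ *
      ((injCount (F ⊔ SimpleGraph.fromEdgeSet ↑p.2) H : ℝ≥0∞) *
        ((Nat.factorial p.1 : ℝ≥0∞) * ((n - m).choose p.1 : ℝ≥0∞)))
      = ((Nat.factorial p.1 : ℝ≥0∞)⁻¹ * (Nat.factorial p.1 : ℝ≥0∞)) *
        (((n - m).choose p.1 : ℝ≥0∞) * (injCount (F ⊔ SimpleGraph.fromEdgeSet ↑p.2) H : ℝ≥0∞)) := by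
    ring
  rw [this, ENNReal.inv_mul_cancel h1 h2, one_mul]

lemma wt_zero (F : SimpleGraph (Fin m)) (p : ℕ × Finset (Sym2 (Fin m)))
    (H : SimpleGraph (Fin n)) (h : n < p.1) : wt F p ⟨n, H⟩ = 0 := by
  rw [wt]
  show (Nat.factorial p.1 : ℝ≥0∞)⁻¹ *
      (injCount (pad (F ⊔ SimpleGraph.fromEdgeSet ↑p.2) p.1) H : ℝ≥0∞) = 0
  rw [injCount_eq_zero _ _ (by omega)]
  simp

lemma supp_termA (F : SimpleGraph (Fin m)) (H : SimpleGraph (Fin n)) :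
    ∀ p ∉ Finset.range (n + 1) ×ˢ (Fᶜ.edgeFinset).powerset,
      termA F p ⟨n, H⟩ = 0 := by
  intro p hp
  by_cases hc : p.2 ⊆ (Fᶜ).edgeFinset ∧ Even (p.1 + p.2.card)
  · rw [termA, if_pos hc, wt_zero]
    by_contra hn
    exact hp (Finset.mem_product.mpr ⟨Finset.mem_range.mpr (by omega),
      Finset.mem_powerset.mpr hc.1⟩)
  · rw [termA, if_neg hc]

lemma supp_termB (F : SimpleGraph (Fin m)) (H : SimpleGraph (Fin n)) :
    ∀ p ∉ Finset.range (n + 1) ×ˢ (Fᶜ.edgeFinset).powerset,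
      termB F p ⟨n, H⟩ = 0 := by
  intro p hp
  by_cases hc : p.2 ⊆ (Fᶜ).edgeFinset ∧ ¬ Even (p.1 + p.2.card)
  · rw [termB, if_pos hc, wt_zero]
    by_contra hn
    exact hp (Finset.mem_product.mpr ⟨Finset.mem_range.mpr (by omega),
      Finset.mem_powerset.mpr hc.1⟩)
  · rw [termB, if_neg hc]

lemma termA_eval (F : SimpleGraph (Fin m)) (H : SimpleGraph (Fin n)) :
    ∀ p ∈ Finset.range (n + 1) ×ˢ (Fᶜ.edgeFinset).powerset,
      termA F p ⟨n, H⟩ = ((if Even (p.1 + p.2.card) then (n - m).choose p.1 *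
        injCount (F ⊔ SimpleGraph.fromEdgeSet ↑p.2) H else 0 : ℕ) : ℝ≥0∞) := by
  intro p hp
  have h2 : p.2 ⊆ (Fᶜ).edgeFinset := Finset.mem_powerset.mp (Finset.mem_product.mp hp).2
  rw [termA]
  by_cases he : Even (p.1 + p.2.card)
  · rw [if_pos ⟨h2, he⟩, wt_eq, if_pos he]
  · rw [if_neg (fun hc => he hc.2), if_neg he]
    simp

lemma termB_eval (F : SimpleGraph (Fin m)) (H : SimpleGraph (Fin n)) :
    ∀ p ∈ Finset.range (n + 1) ×ˢ (Fᶜ.edgeFinset).powerset,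
      termB F p ⟨n, H⟩ = ((if ¬ Even (p.1 + p.2.card) then (n - m).choose p.1 *
        injCount (F ⊔ SimpleGraph.fromEdgeSet ↑p.2) H else 0 : ℕ) : ℝ≥0∞) := by
  intro p hp
  have h2 : p.2 ⊆ (Fᶜ).edgeFinset := Finset.mem_powerset.mp (Finset.mem_product.mp hp).2
  rw [termB]
  by_cases he : Even (p.1 + p.2.card)
  · rw [if_neg (fun hc => hc.2 he), if_neg (fun hc => hc he)]
    simp
  · rw [if_pos ⟨h2, he⟩, wt_eq, if_pos he]

lemma tsum_termA_eq (F : SimpleGraph (Fin m)) (H : SimpleGraph (Fin n)) :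
    ∑' p : ℕ × Finset (Sym2 (Fin m)), termA F p ⟨n, H⟩
      = (Nat.card (F ≃g F) : ℝ≥0∞) * (if Nonempty (H ≃g F) then 1 else 0)
        + ∑' p, termB F p ⟨n, H⟩ := by
  rw [tsum_eq_sum (supp_termA F H), tsum_eq_sum (supp_termB F H),
    Finset.sum_congr rfl (termA_eval F H), Finset.sum_congr rfl (termB_eval F H),
    ← Nat.cast_sum, ← Nat.cast_sum, grand]
  push_cast
  by_cases h : Nonempty (H ≃g F) <;> simp [h]

lemma tsum_termB_le (F : SimpleGraph (Fin m)) (H : SimpleGraph (Fin n)) :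
    ∑' p : ℕ × Finset (Sym2 (Fin m)), termB F p ⟨n, H⟩
      ≤ ((2 ^ (Fintype.card (Sym2 (Fin m))) * (2 ^ n * n ^ m) : ℕ) : ℝ≥0∞) := by
  rw [tsum_eq_sum (supp_termB F H), Finset.sum_congr rfl (termB_eval F H), ← Nat.cast_sum]
  apply Nat.cast_le.mpr
  calc ∑ p ∈ Finset.range (n + 1) ×ˢ (Fᶜ.edgeFinset).powerset,
        (if ¬ Even (p.1 + p.2.card) then (n - m).choose p.1 *
          injCount (F ⊔ SimpleGraph.fromEdgeSet ↑p.2) H else 0)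
      ≤ ∑ p ∈ Finset.range (n + 1) ×ˢ (Fᶜ.edgeFinset).powerset,
          (n - m).choose p.1 * n ^ m := by
        apply Finset.sum_le_sum
        intro p _
        have hinj : injCount (F ⊔ SimpleGraph.fromEdgeSet ↑p.2) H ≤ n ^ m := by
          rw [injCount]
          calc Nat.card {f : Fin m → Fin n // Function.Injective f ∧
                ∀ a b, (F ⊔ SimpleGraph.fromEdgeSet ↑p.2).Adj a b →
                  H.Adj (f a) (f b)}
              ≤ Nat.card (Fin m → Fin n) :=
                Nat.card_le_card_of_injective Subtype.val Subtype.val_injective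
            _ = n ^ m := by
                rw [Nat.card_eq_fintype_card, Fintype.card_fun]
                simp
        split
        · exact Nat.mul_le_mul_left _ hinj
        · exact Nat.zero_le _
    _ = (∑ k ∈ Finset.range (n + 1), (n - m).choose k) *
          ((Fᶜ.edgeFinset).powerset.card * n ^ m) := by
        rw [Finset.sum_product]
        have hstep : ∀ k : ℕ, ∑ _y ∈ (Fᶜ.edgeFinset).powerset, (n - m).choose k * n ^ m
            = (n - m).choose k * ((Fᶜ.edgeFinset).powerset.card * n ^ m) := by
          intro k
          rw [Finset.sum_const, smul_eq_mul]
          ring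
        rw [Finset.sum_congr rfl fun k _ => hstep k, ← Finset.sum_mul]
    _ ≤ 2 ^ n * (2 ^ (Fintype.card (Sym2 (Fin m))) * n ^ m) := by
        apply Nat.mul_le_mul
        · calc ∑ k ∈ Finset.range (n + 1), (n - m).choose k
              ≤ ∑ k ∈ Finset.range (n + 1), n.choose k :=
                Finset.sum_le_sum fun k _ => Nat.choose_le_choose k (by omega)
            _ = 2 ^ n := Nat.sum_range_choose n
        · apply Nat.mul_le_mul_right
          rw [Finset.card_powerset]
          exact Nat.pow_le_pow_right (by norm_num) (Finset.card_le_univ _)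
    _ = 2 ^ (Fintype.card (Sym2 (Fin m))) * (2 ^ n * n ^ m) := by ring

lemma termA_factor (F : SimpleGraph (Fin m)) (p : ℕ × Finset (Sym2 (Fin m)))
    (W : FinGraph) :
    termA F p W = (if p.2 ⊆ (Fᶜ).edgeFinset ∧ Even (p.1 + p.2.card)
        then (Nat.factorial p.1 : ℝ≥0∞)⁻¹ else 0) *
      (injCount (pad (F ⊔ SimpleGraph.fromEdgeSet ↑p.2) p.1) W.2 : ℝ≥0∞) := by
  rw [termA, wt]
  split
  · rfl
  · rw [zero_mul]

lemma termB_factor (F : SimpleGraph (Fin m)) (p : ℕ × Finset (Sym2 (Fin m)))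
    (W : FinGraph) :
    termB F p W = (if p.2 ⊆ (Fᶜ).edgeFinset ∧ ¬ Even (p.1 + p.2.card)
        then (Nat.factorial p.1 : ℝ≥0∞)⁻¹ else 0) *
      (injCount (pad (F ⊔ SimpleGraph.fromEdgeSet ↑p.2) p.1) W.2 : ℝ≥0∞) := by
  rw [termB, wt]
  split
  · rfl
  · rw [zero_mul]

lemma exists_bound (m : ℕ) {ε : ℝ} (hε : 0 < ε) :
    ∃ C : ℝ, 0 ≤ C ∧ ∀ n : ℕ, (n : ℝ) ^ m * 2 ^ n ≤ C * (2 + ε) ^ n := by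
  have hr : (1 : ℝ) < 1 + ε / 2 := by linarith
  obtain ⟨C, hC⟩ := (tendsto_pow_const_div_const_pow_of_one_lt m hr).bddAbove_range
  rw [mem_upperBounds] at hC
  have hC' : ∀ n : ℕ, (n : ℝ) ^ m / (1 + ε / 2) ^ n ≤ C := fun n => hC _ ⟨n, rfl⟩
  refine ⟨C, le_trans (by positivity) (hC' 0), fun n => ?_⟩
  have h2 : (0 : ℝ) < (1 + ε / 2) ^ n := by positivity
  have h3 : (n : ℝ) ^ m ≤ C * (1 + ε / 2) ^ n := by
    have := hC' n
    rw [div_le_iff₀ h2] at this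
    exact this
  calc (n : ℝ) ^ m * 2 ^ n ≤ (C * (1 + ε / 2) ^ n) * 2 ^ n :=
        mul_le_mul_of_nonneg_right h3 (by positivity)
    _ = C * (2 + ε) ^ n := by
        rw [mul_assoc, ← mul_pow, show (1 + ε / 2) * 2 = 2 + ε by ring]

end
end Stmt14

open Stmt14

/-- Let `G`, `G'` be random finite graphs such that for every finite
graph `F`, `E[inj(F, G)] = E[inj(F, G')]`.  If `X` is the number of vertices of `G` and
`E[(2+ε)^X] < ∞` for some `ε > 0`, then `G` and `G'` have the same distribution up to
isomorphism: `P(G ≅ F) = P'(G' ≅ F)` for every finite graph `F`. -/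
theorem stmt14 {Θ Θ' : Type*} [MeasurableSpace Θ] [MeasurableSpace Θ']
    (P : Measure Θ) (P' : Measure Θ') [IsProbabilityMeasure P] [IsProbabilityMeasure P']
    (G : Θ → FinGraph) (G' : Θ' → FinGraph) (hG : Measurable G) (hG' : Measurable G')
    (hmom : ∀ (m : ℕ) (F : SimpleGraph (Fin m)),
      ∫⁻ θ, (injCount F (G θ).2 : ℝ≥0∞) ∂P = ∫⁻ θ, (injCount F (G' θ).2 : ℝ≥0∞) ∂P')
    (ε : ℝ) (hε : 0 < ε)
    (hexp : ∫⁻ θ, ENNReal.ofReal ((2 + ε) ^ (G θ).1) ∂P < ⊤) :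
    ∀ (m : ℕ) (F : SimpleGraph (Fin m)),
      P {θ | Nonempty ((G θ).2 ≃g F)} = P' {θ | Nonempty ((G' θ).2 ≃g F)} := by
  intro m F
  classical
  set c : ℝ≥0∞ := (Nat.card (F ≃g F) : ℝ≥0∞) with hc
  have measG : ∀ (h : FinGraph → ℝ≥0∞), Measurable fun θ => h (G θ) :=
    fun h => measurable_from_top.comp hG
  have measG' : ∀ (h : FinGraph → ℝ≥0∞), Measurable fun θ => h (G' θ) :=
    fun h => measurable_from_top.comp hG'
  -- per-index equality of integrals
  have htermA : ∀ (p : ℕ × Finset (Sym2 (Fin m))),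
      ∫⁻ θ, termA F p (G θ) ∂P = ∫⁻ θ, termA F p (G' θ) ∂P' := by
    intro p
    simp only [termA_factor]
    rw [lintegral_const_mul _ (measG fun W => (injCount
        (pad (F ⊔ SimpleGraph.fromEdgeSet ↑p.2) p.1) W.2 : ℝ≥0∞)),
      lintegral_const_mul _ (measG' fun W => (injCount
        (pad (F ⊔ SimpleGraph.fromEdgeSet ↑p.2) p.1) W.2 : ℝ≥0∞)),
      hmom]
  have htermB : ∀ (p : ℕ × Finset (Sym2 (Fin m))),
      ∫⁻ θ, termB F p (G θ) ∂P = ∫⁻ θ, termB F p (G' θ) ∂P' := by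
    intro p
    simp only [termB_factor]
    rw [lintegral_const_mul _ (measG fun W => (injCount
        (pad (F ⊔ SimpleGraph.fromEdgeSet ↑p.2) p.1) W.2 : ℝ≥0∞)),
      lintegral_const_mul _ (measG' fun W => (injCount
        (pad (F ⊔ SimpleGraph.fromEdgeSet ↑p.2) p.1) W.2 : ℝ≥0∞)),
      hmom]
  have hAint : ∫⁻ θ, (∑' p : ℕ × Finset (Sym2 (Fin m)), termA F p (G θ)) ∂P
      = ∫⁻ θ, (∑' p : ℕ × Finset (Sym2 (Fin m)), termA F p (G' θ)) ∂P' := by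
    rw [lintegral_tsum (fun p => (measG (termA F p)).aemeasurable),
      lintegral_tsum (fun p => (measG' (termA F p)).aemeasurable)]
    exact tsum_congr htermA
  have hBint : ∫⁻ θ, (∑' p : ℕ × Finset (Sym2 (Fin m)), termB F p (G θ)) ∂P
      = ∫⁻ θ, (∑' p : ℕ × Finset (Sym2 (Fin m)), termB F p (G' θ)) ∂P' := by
    rw [lintegral_tsum (fun p => (measG (termB F p)).aemeasurable),
      lintegral_tsum (fun p => (measG' (termB F p)).aemeasurable)]
    exact tsum_congr htermB
  -- pointwise identity
  have hptA : ∀ W : FinGraph, (∑' p : ℕ × Finset (Sym2 (Fin m)), termA F p W)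
      = c * (if Nonempty (W.2 ≃g F) then 1 else 0)
        + ∑' p : ℕ × Finset (Sym2 (Fin m)), termB F p W := by
    rintro ⟨n, H⟩
    exact tsum_termA_eq F H
  -- measurable sets
  have hset : MeasurableSet {θ | Nonempty ((G θ).2 ≃g F)} :=
    hG (MeasurableSpace.measurableSet_top (s := {W : FinGraph | Nonempty (W.2 ≃g F)}))
  have hset' : MeasurableSet {θ' | Nonempty ((G' θ').2 ≃g F)} :=
    hG' (MeasurableSpace.measurableSet_top (s := {W : FinGraph | Nonempty (W.2 ≃g F)}))
  -- indicator integrals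
  have hind : ∫⁻ θ, c * (if Nonempty ((G θ).2 ≃g F) then 1 else 0) ∂P
      = c * P {θ | Nonempty ((G θ).2 ≃g F)} := by
    rw [lintegral_const_mul _ (measG fun W => if Nonempty (W.2 ≃g F) then 1 else 0)]
    congr 1
    have heq : (fun θ => (if Nonempty ((G θ).2 ≃g F) then (1 : ℝ≥0∞) else 0))
        = fun θ => ({θ | Nonempty ((G θ).2 ≃g F)}).indicator (fun _ => 1) θ := by
      funext θ
      rw [Set.indicator_apply]
      rfl
    rw [heq, lintegral_indicator_const hset, one_mul]
  have hind' : ∫⁻ θ', c * (if Nonempty ((G' θ').2 ≃g F) then 1 else 0) ∂P'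
      = c * P' {θ' | Nonempty ((G' θ').2 ≃g F)} := by
    rw [lintegral_const_mul _ (measG' fun W => if Nonempty (W.2 ≃g F) then 1 else 0)]
    congr 1
    have heq : (fun θ' => (if Nonempty ((G' θ').2 ≃g F) then (1 : ℝ≥0∞) else 0))
        = fun θ' => ({θ' | Nonempty ((G' θ').2 ≃g F)}).indicator (fun _ => 1) θ' := by
      funext θ'
      rw [Set.indicator_apply]
      rfl
    rw [heq, lintegral_indicator_const hset', one_mul]
  -- finiteness of the B side
  have hBfin : ∫⁻ θ, (∑' p : ℕ × Finset (Sym2 (Fin m)), termB F p (G θ)) ∂P < ⊤ := by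
    obtain ⟨C, hC0, hC⟩ := exists_bound m hε
    calc ∫⁻ θ, (∑' p : ℕ × Finset (Sym2 (Fin m)), termB F p (G θ)) ∂P
        ≤ ∫⁻ θ, ((2 ^ (Fintype.card (Sym2 (Fin m))) : ℝ≥0∞) *
            (ENNReal.ofReal C * ENNReal.ofReal ((2 + ε) ^ (G θ).1))) ∂P := by
          apply lintegral_mono
          intro θ
          refine le_trans (tsum_termB_le F (G θ).2) ?_
          set n := (G θ).1 with hn
          have h1 : ((2 ^ (Fintype.card (Sym2 (Fin m))) * (2 ^ n * n ^ m) : ℕ) : ℝ≥0∞)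
              = (2 ^ (Fintype.card (Sym2 (Fin m))) : ℝ≥0∞) *
                ENNReal.ofReal ((n : ℝ) ^ m * 2 ^ n) := by
            have h2 : ((n : ℝ) ^ m * 2 ^ n) = ((2 ^ n * n ^ m : ℕ) : ℝ) := by
              push_cast
              ring
            rw [h2, ENNReal.ofReal_natCast]
            push_cast
            ring
          rw [h1]
          apply _root_.mul_le_mul_right
          rw [← ENNReal.ofReal_mul hC0]
          exact ENNReal.ofReal_le_ofReal (hC n)
      _ = (2 ^ (Fintype.card (Sym2 (Fin m))) : ℝ≥0∞) * ENNReal.ofReal C *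
            ∫⁻ θ, ENNReal.ofReal ((2 + ε) ^ (G θ).1) ∂P := by
          simp only [← mul_assoc]
          rw [lintegral_const_mul]
          exact measG fun W => ENNReal.ofReal ((2 + ε) ^ W.1)
      _ < ⊤ := by
          apply ENNReal.mul_lt_top
          · apply ENNReal.mul_lt_top
            · exact lt_of_le_of_ne le_top (ENNReal.pow_ne_top (by norm_num))
            · exact ENNReal.ofReal_lt_top
          · exact hexp
  have hBfin' : ∫⁻ θ', (∑' p : ℕ × Finset (Sym2 (Fin m)), termB F p (G' θ')) ∂P' < ⊤ :=
    hBint ▸ hBfin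
  -- combine
  have expandP : ∫⁻ θ, (∑' p : ℕ × Finset (Sym2 (Fin m)), termA F p (G θ)) ∂P
      = c * P {θ | Nonempty ((G θ).2 ≃g F)}
        + ∫⁻ θ, (∑' p : ℕ × Finset (Sym2 (Fin m)), termB F p (G θ)) ∂P := by
    rw [lintegral_congr (fun θ => hptA (G θ)),
      lintegral_add_left (measG fun W => c * (if Nonempty (W.2 ≃g F) then 1 else 0)),
      hind]
  have expandP' : ∫⁻ θ', (∑' p : ℕ × Finset (Sym2 (Fin m)), termA F p (G' θ')) ∂P'
      = c * P' {θ' | Nonempty ((G' θ').2 ≃g F)}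
        + ∫⁻ θ', (∑' p : ℕ × Finset (Sym2 (Fin m)), termB F p (G' θ')) ∂P' := by
    rw [lintegral_congr (fun θ' => hptA (G' θ')),
      lintegral_add_left (measG' fun W => c * (if Nonempty (W.2 ≃g F) then 1 else 0)),
      hind']
  have main : c * P {θ | Nonempty ((G θ).2 ≃g F)}
        + ∫⁻ θ, (∑' p : ℕ × Finset (Sym2 (Fin m)), termB F p (G θ)) ∂P
      = c * P' {θ' | Nonempty ((G' θ').2 ≃g F)}
        + ∫⁻ θ, (∑' p : ℕ × Finset (Sym2 (Fin m)), termB F p (G θ)) ∂P := by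
    rw [← expandP, hAint, expandP', hBint]
  have hcancel : c * P {θ | Nonempty ((G θ).2 ≃g F)}
      = c * P' {θ' | Nonempty ((G' θ').2 ≃g F)} := by
    have ht : ∫⁻ θ, (∑' p : ℕ × Finset (Sym2 (Fin m)), termB F p (G θ)) ∂P ≠ ⊤ :=
      hBfin.ne
    rw [add_comm _ (∫⁻ θ, _ ∂P), add_comm _ (∫⁻ θ, _ ∂P)] at main
    exact (ENNReal.add_right_inj ht).mp main
  -- cancel c
  have hc0 : c ≠ 0 := by
    rw [hc]
    have hfin : Finite (F ≃g F) := Finite.of_injective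
      (fun φ => (φ : Fin m → Fin m)) (DFunLike.coe_injective)
    have : 0 < Nat.card (F ≃g F) := Nat.card_pos
    exact_mod_cast this.ne'
  have hctop : c ≠ ⊤ := ENNReal.natCast_ne_top _
  have h2 : c⁻¹ * (c * P {θ | Nonempty ((G θ).2 ≃g F)})
      = c⁻¹ * (c * P' {θ' | Nonempty ((G' θ').2 ≃g F)}) := by rw [hcancel]
  rwa [← mul_assoc, ← mul_assoc, ENNReal.inv_mul_cancel hc0 hctop, one_mul, one_mul] at h2
end

section
/- Let W be a graphon over a σ-finite measure space with marginal D_W(x) = ∫ W(x,y) dμ(y), and suppose that for every ε > 0 there exists M < ∞ and a measurable subset Ω₀ with μ(Ω₀) ≤ M such that ‖W‖₁ − ‖W|_{Ω₀}‖₁ ≤ ε (uniformly over a family of graphons, uniform tail regularity). Then for every ε > 0 there exists a δ > 0 such that ∫ D_W · 1_{D_W ≤ δ} dμ ≤ ε, uniformly over the family. -/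
open MeasureTheory ENNReal
open scoped Classical

/-- Let `(W i)` be a family of graphons (symmetric measurable functions
with values in `[0,1]`), each integrable, over σ-finite measure spaces, with marginals
`D_{W i}(x) = ∫ W i x y dμ i (y)`.  Suppose the family is uniformly tail regular: for every
`ε > 0` there is `M < ∞` such that for each `i` there is a measurable `Ω₀` with
`μ i Ω₀ ≤ M` and `‖W i‖₁ − ‖(W i)|_{Ω₀}‖₁ ≤ ε`.  Then for every `ε > 0` there is `δ > 0`
such that `∫ D_{W i} · 1_{D_{W i} ≤ δ} dμ i ≤ ε` for all `i`. -/
theorem stmt15 {ι : Type*} {Ω : ι → Type*} [∀ i, MeasurableSpace (Ω i)]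
    (μ : ∀ i, Measure (Ω i)) [∀ i, SigmaFinite (μ i)]
    (W : ∀ i, Ω i → Ω i → ℝ)
    (hmeas : ∀ i, Measurable (Function.uncurry (W i)))
    (hsymm : ∀ i x y, W i x y = W i y x)
    (hrange : ∀ i x y, W i x y ∈ Set.Icc (0:ℝ) 1)
    (hint : ∀ i, (∫⁻ x, ∫⁻ y, ENNReal.ofReal (W i x y) ∂μ i ∂μ i) < ⊤)
    (htail : ∀ ε : ℝ, 0 < ε → ∃ M : ℝ, ∀ i, ∃ Ω₀ : Set (Ω i), MeasurableSet Ω₀ ∧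
      μ i Ω₀ ≤ ENNReal.ofReal M ∧
      (∫⁻ x, ∫⁻ y, ENNReal.ofReal (W i x y) ∂μ i ∂μ i)
          - (∫⁻ x in Ω₀, ∫⁻ y in Ω₀, ENNReal.ofReal (W i x y) ∂μ i ∂μ i)
        ≤ ENNReal.ofReal ε) :
    ∀ ε : ℝ, 0 < ε → ∃ δ : ℝ, 0 < δ ∧ ∀ i,
      (∫⁻ x, (if (∫⁻ y, ENNReal.ofReal (W i x y) ∂μ i) ≤ ENNReal.ofReal δ
              then ∫⁻ y, ENNReal.ofReal (W i x y) ∂μ i else 0) ∂μ i)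
        ≤ ENNReal.ofReal ε := by
  intro ε hε
  obtain ⟨M, hM⟩ := htail (ε / 2) (by linarith)
  set M' : ℝ := max M 1 with hM'def
  have hM'pos : (0:ℝ) < M' := lt_of_lt_of_le one_pos (le_max_right _ _)
  refine ⟨ε / 2 / M', div_pos (by linarith) hM'pos, fun i => ?_⟩
  set δ : ℝ := ε / 2 / M'
  have hδpos : 0 < δ := div_pos (by linarith) hM'pos
  obtain ⟨Ω₀, hΩ₀m, hΩ₀M, hΩ₀tail⟩ := hM i
  set f : Ω i → ℝ≥0∞ := fun x => ∫⁻ y, ENNReal.ofReal (W i x y) ∂μ i with hf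
  have hfm : Measurable f := by
    apply Measurable.lintegral_prod_right'
      (f := fun p : Ω i × Ω i => ENNReal.ofReal (W i p.1 p.2))
    exact ENNReal.measurable_ofReal.comp (hmeas i)
  -- pointwise bound
  have hpt : ∀ x, (if f x ≤ ENNReal.ofReal δ then f x else 0)
      ≤ Ω₀.indicator (fun _ => ENNReal.ofReal δ) x + Ω₀ᶜ.indicator f x := by
    intro x
    by_cases hx : x ∈ Ω₀
    · by_cases h : f x ≤ ENNReal.ofReal δ
      · simp [h, Set.indicator_of_mem hx, Set.indicator_of_notMem (Set.notMem_compl_iff.mpr hx)]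
      · simp [h]
    · by_cases h : f x ≤ ENNReal.ofReal δ
      · simp only [Set.indicator_of_notMem hx, Set.indicator_of_mem (Set.mem_compl hx),
          zero_add, h, if_true]
        exact le_refl _
      · simp [h]
  calc (∫⁻ x, (if f x ≤ ENNReal.ofReal δ then f x else 0) ∂μ i)
      ≤ ∫⁻ x, (Ω₀.indicator (fun _ => ENNReal.ofReal δ) x + Ω₀ᶜ.indicator f x) ∂μ i :=
        lintegral_mono hpt
    _ = ENNReal.ofReal δ * μ i Ω₀ + ∫⁻ x in Ω₀ᶜ, f x ∂μ i := by
        rw [lintegral_add_left ((measurable_const).indicator hΩ₀m),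
          lintegral_indicator hΩ₀m, lintegral_indicator hΩ₀m.compl,
          setLIntegral_const]
    _ ≤ ENNReal.ofReal (ε / 2) + ENNReal.ofReal (ε / 2) := by
        refine add_le_add ?_ ?_
        · -- δ * μ Ω₀ ≤ ε/2
          calc ENNReal.ofReal δ * μ i Ω₀ ≤ ENNReal.ofReal δ * ENNReal.ofReal M' := by
                refine mul_le_mul_right (le_trans hΩ₀M ?_) _
                exact ENNReal.ofReal_le_ofReal (le_max_left _ _)
            _ = ENNReal.ofReal (δ * M') := (ENNReal.ofReal_mul hδpos.le).symm
            _ = ENNReal.ofReal (ε / 2) := by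
                rw [div_mul_cancel₀]
                exact ne_of_gt hM'pos
        · -- tail bound
          refine le_trans ?_ hΩ₀tail
          have hfin : (∫⁻ x in Ω₀, ∫⁻ y in Ω₀, ENNReal.ofReal (W i x y) ∂μ i ∂μ i) ≠ ⊤ := by
            refine ne_of_lt (lt_of_le_of_lt ?_ (hint i))
            exact le_trans (lintegral_mono fun x => setLIntegral_le_lintegral _ _)
              (setLIntegral_le_lintegral _ _)
          refine (ENNReal.cancel_of_ne hfin).le_tsub_of_add_le_left ?_
          have h1 : (∫⁻ x in Ω₀, ∫⁻ y in Ω₀, ENNReal.ofReal (W i x y) ∂μ i ∂μ i)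
              ≤ ∫⁻ x in Ω₀, f x ∂μ i :=
            lintegral_mono fun x => setLIntegral_le_lintegral _ _
          calc (∫⁻ x in Ω₀, ∫⁻ y in Ω₀, ENNReal.ofReal (W i x y) ∂μ i ∂μ i)
                + ∫⁻ x in Ω₀ᶜ, f x ∂μ i
              ≤ (∫⁻ x in Ω₀, f x ∂μ i) + ∫⁻ x in Ω₀ᶜ, f x ∂μ i := add_le_add h1 le_rfl
            _ = ∫⁻ x, f x ∂μ i := lintegral_add_compl f hΩ₀m
    _ = ENNReal.ofReal ε := by
        rw [← ENNReal.ofReal_add (by linarith) (by linarith)]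
        norm_num
end
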